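/- Let p = (p_1,…,p_k) be a signed composition of n with ξ_i the sign of p_i. For each ordered set partition (J_1,…,J_k) of [n] with |J_i| = |p_i| for all i, let w_{(J_1,…,J_k)} ∈ S_n ⊆ W_n map the block P_i order-preservingly onto J_i. Then e_p = Σ_{(J_1,…,J_k)} w_{(J_1,…,J_k)} ε_{P_1}^{ξ_1} r_{P_1} ⋯ ε_{P_k}^{ξ_k} r_{P_k}, the sum over all such ordered set partitions; that is, Vazirani's element I_p (the sum over ordered set partitions of the concatenation products I_{[J_1]}^{ξ_1} * ⋯ * I_{[J_k]}^{ξ_k}) equals e_p. -/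

import Mathlib

open scoped BigOperators

noncomputable section

namespace HypOct

/-- Permutations of ℤ; signed permutations will be the elements supported on `±[n]`
that commute with negation. -/
abbrev Perm' := Equiv.Perm ℤ

open scoped Classical in
/-- The permutation of ℤ with underlying function `f`, if `f` is (the function of)
a permutation; junk value `1` otherwise. -/
noncomputable def permOfFun (f : ℤ → ℤ) : Perm' :=
  if h : ∃ e : Perm', ⇑e = f then h.choose else 1

/-- Extend a function on the positive integers to an odd function on ℤ. -/
def oddify (f : ℤ → ℤ) : ℤ → ℤ := fun a =>
  if 0 < a then f a else if a < 0 then -(f (-a)) else 0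

/-- The `n`-th hyperoctahedral group `W_n`, realized as the subgroup of permutations `w`
of ℤ such that `w (-a) = - w a` for all `a` and `w` fixes all `a` with `|a| > n`. -/
def W (n : ℕ) : Subgroup Perm' where
  carrier := {w | (∀ a : ℤ, w (-a) = -(w a)) ∧ ∀ a : ℤ, (n : ℤ) < |a| → w a = a}
  one_mem' := ⟨fun a => rfl, fun a _ => rfl⟩
  mul_mem' := by
    rintro a b ⟨ha1, ha2⟩ ⟨hb1, hb2⟩
    refine ⟨fun x => ?_, fun x hx => ?_⟩
    · simp [Equiv.Perm.mul_apply, hb1, ha1]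
    · simp [Equiv.Perm.mul_apply, hb2 x hx, ha2 x hx]
  inv_mem' := by
    rintro a ⟨ha1, ha2⟩
    refine ⟨fun x => ?_, fun x hx => ?_⟩
    · apply a.injective
      rw [Equiv.Perm.coe_inv, Equiv.apply_symm_apply, ha1, Equiv.apply_symm_apply]
    · apply a.injective
      rw [Equiv.Perm.coe_inv, Equiv.apply_symm_apply, ha2 x hx]

open scoped Classical in
/-- The element of `W n` with underlying permutation `e`, junk value `1` if `e ∉ W n`. -/
noncomputable def toW (n : ℕ) (e : Perm') : W n :=
  if h : e ∈ W n then ⟨e, h⟩ else 1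

/-- Underlying function of the positive cycle `(u+1, u+2, …, v)` as a signed permutation. -/
def posCycleFun (u v : ℤ) : ℤ → ℤ := oddify fun a =>
  if u < a ∧ a < v then a + 1 else if a = v ∧ u < a then u + 1 else a

/-- Underlying function of the negative cycle `(u+1, u+2, …, v)⁻` as a signed permutation:
it maps `v` to `-(u+1)`. -/
def negCycleFun (u v : ℤ) : ℤ → ℤ := oddify fun a =>
  if u < a ∧ a < v then a + 1 else if a = v ∧ u < a then -(u + 1) else a

def posCycle (u v : ℤ) : Perm' := permOfFun (posCycleFun u v)

def negCycle (u v : ℤ) : Perm' := permOfFun (negCycleFun u v)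

/-- The signed permutation `w_{0,P}` negating every element of `P` (and of `-P`). -/
def negOnFun (P : Finset ℤ) : ℤ → ℤ := fun a => if a ∈ P ∨ -a ∈ P then -a else a

def negOn (P : Finset ℤ) : Perm' := permOfFun (negOnFun P)

/-- A signed composition of `n`: a list of nonzero integers whose absolute values sum to `n`. -/
def IsSignedComposition (n : ℕ) (p : List ℤ) : Prop :=
  (∀ x ∈ p, x ≠ 0) ∧ (p.map Int.natAbs).sum = n

/-- A composition of `n`: a list of positive integers summing to `n`. -/
def IsComposition (n : ℕ) (p : List ℤ) : Prop :=
  (∀ x ∈ p, 0 < x) ∧ (p.map Int.natAbs).sum = n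

/-- A signed partition of `n`: positive parts first, in nonincreasing order, followed by
the negative parts in order of nonincreasing absolute value. -/
def IsSignedPartition (n : ℕ) (l : List ℤ) : Prop :=
  IsSignedComposition n l ∧ ∃ pos neg : List ℤ, l = pos ++ neg ∧
    (∀ x ∈ pos, 0 < x) ∧ (∀ x ∈ neg, x < 0) ∧
    pos.Chain' (· ≥ ·) ∧ neg.Chain' (· ≤ ·)

/-- `p̂ i`, the sum of the absolute values of the first `i` parts of `p`. -/
def phat (p : List ℤ) (i : ℕ) : ℕ := ((p.take i).map Int.natAbs).sum

/-- The `i`-th block `P_i = {p̂_{i-1}+1, …, p̂_i}` of a signed composition (indexed from `i = 0`). -/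
def blk (p : List ℤ) (i : ℕ) : Finset ℤ :=
  Finset.Icc ((phat p i : ℤ) + 1) (phat p (i + 1))

/-- `|p| = (|p_1|, …, |p_k|)`. -/
def absList (p : List ℤ) : List ℤ := p.map (fun x => |x|)

/-- The number of positive parts of `p`. -/
def posCount (p : List ℤ) : ℕ := (p.filter (fun x => decide (0 < x))).length

/-- `p'`: negate the even parts of `p` and keep the odd parts. -/
def lamPrime (p : List ℤ) : List ℤ := p.map (fun x => if Odd x then x else -x)

/-- `←p`: the signed partition obtained by rearranging the parts of `p`. -/
def resort (p : List ℤ) : List ℤ :=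
  (List.insertionSort (· ≥ ·) (p.filter (fun x => decide (0 < x)))) ++
  (List.insertionSort (· ≤ ·) (p.filter (fun x => decide (x < 0))))

/-- The order of the stabilizer of `p` in the symmetric group `S_k` permuting its `k` parts. -/
def stabCard (p : List ℤ) : ℕ :=
  Nat.card {σ : Equiv.Perm (Fin p.length) // ∀ i, p.get (σ i) = p.get i}

/-- The Coxeter generating set `{t_1, s_1, …, s_{n-1}}` of `W n`. -/
def genSet (n : ℕ) : Set (W n) :=
  {w | (w : Perm') = negOn {1} ∨ ∃ i : ℕ, 1 ≤ i ∧ i + 1 ≤ n ∧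
    (w : Perm') = permOfFun (oddify (fun a =>
      if a = (i : ℤ) then (i : ℤ) + 1 else if a = (i : ℤ) + 1 then (i : ℤ) else a))}

/-- The Coxeter length of `w ∈ W n`. -/
def len (n : ℕ) (w : W n) : ℕ :=
  sInf {k | ∃ l : List (W n), l.length = k ∧ (∀ g ∈ l, g ∈ genSet n) ∧ l.prod = w}

/-- The signed Young subgroup `W_p ⊆ W_n` attached to a signed composition `p`. -/
def Wyoung (n : ℕ) (p : List ℤ) : Set (W n) :=
  {w | ∀ i < p.length,
    (∀ a ∈ blk p i, (w : Perm') a ∈ blk p i ∨ -((w : Perm') a) ∈ blk p i) ∧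
    (p.getD i 0 < 0 → ∀ a ∈ blk p i, (w : Perm') a ∈ blk p i)}

/-- `X_p`: the set of minimal length representatives of the left cosets of `W_p` in `W_n`. -/
def Xmin (n : ℕ) (p : List ℤ) : Set (W n) :=
  {w | ∀ v ∈ Wyoung n p, len n w ≤ len n (w * v)}

/-- `x_p = Σ_{w ∈ X_p} w ∈ ℂ W_n`. -/
def xp (n : ℕ) (p : List ℤ) : MonoidAlgebra ℂ (W n) :=
  ∑ᶠ w ∈ Xmin n p, MonoidAlgebra.single w (1 : ℂ)

/-- The copy of the symmetric group `S_P` inside `W n`: elements taking positive values on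
positive integers and fixing every positive integer not in `P`. -/
def SonP (n : ℕ) (P : Finset ℤ) : Set (W n) :=
  {w | (∀ a : ℤ, 0 < a → 0 < (w : Perm') a) ∧
    ∀ a : ℤ, 0 < a → a ∉ P → (w : Perm') a = a}

/-- The `i`-th smallest element of `P` (indexed from 0). -/
def sortedGet (P : Finset ℤ) (i : ℕ) : ℤ := (P.sort (· ≤ ·)).getD i 0

/-- The descent set of a permutation `w` of the ordered set `P = {z_0 < z_1 < ⋯}`:
positions `i` with `w z_i > w z_{i+1}`. -/
def descOnP (P : Finset ℤ) (w : Perm') : Finset ℕ :=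
  (Finset.range (P.card - 1)).filter (fun i => w (sortedGet P (i + 1)) < w (sortedGet P i))

/-- The Reutenauer idempotent `r_P ∈ ℂ S_P ⊆ ℂ W_n`. -/
def reutP (n : ℕ) (P : Finset ℤ) : MonoidAlgebra ℂ (W n) :=
  ∑ A ∈ (Finset.range (P.card - 1)).powerset,
    (((-1 : ℂ) ^ A.card) / ((A.card : ℂ) + 1)) •
      ∑ᶠ w ∈ {w ∈ SonP n P | descOnP P (w : Perm') ⊆ A}, MonoidAlgebra.single w (1 : ℂ)

/-- `ε_P^± = (1/2)(id ± w_{0,P})`; `sgn = true` for `+`, `sgn = false` for `-`. -/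
def epsP (n : ℕ) (P : Finset ℤ) (sgn : Bool) : MonoidAlgebra ℂ (W n) :=
  (1 / 2 : ℂ) • (1 + (if sgn then (1 : ℂ) else -1) • MonoidAlgebra.single (toW n (negOn P)) (1 : ℂ))

/-- `e_p = x_{|p|} ε_{P_1}^{ξ_1} r_{P_1} ⋯ ε_{P_k}^{ξ_k} r_{P_k}`. -/
def eP (n : ℕ) (p : List ℤ) : MonoidAlgebra ℂ (W n) :=
  xp n (absList p) * ((List.range p.length).map (fun i =>
    epsP n (blk p i) (decide (0 < p.getD i 0)) * reutP n (blk p i))).prod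

/-- `E_λ = (1/k!) Σ_{←p = λ} e_p`, the sum being over the signed compositions `p`
whose parts rearrange to `λ`. -/
def Eidem (n : ℕ) (lam : List ℤ) : MonoidAlgebra ℂ (W n) :=
  ((Nat.factorial lam.length : ℂ))⁻¹ • ∑ᶠ p ∈ {q : List ℤ | List.Perm q lam}, eP n p

/-- `ω_m = e^{2πi/m}`. -/
def omegaC (m : ℕ) : ℂ := Complex.exp (2 * (Real.pi : ℂ) * Complex.I / (m : ℂ))

/-- `ζ_g = (1/m) Σ_{j=1}^m ω_m^{-j} g^j`, where `m` is the order of `g`. -/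
def zeta {G : Type*} [Group G] (g : G) : MonoidAlgebra ℂ G :=
  ((orderOf g : ℂ))⁻¹ • ∑ j ∈ Finset.range (orderOf g),
    ((omegaC (orderOf g)) ^ (j + 1))⁻¹ • MonoidAlgebra.single (g ^ (j + 1)) (1 : ℂ)

/-- `ζ̃_g = (1/m) Σ_{j=1}^m (ω_m^{(m+1)/2})^{-j} g^j`, where `m` is the order of `g`. -/
def zetaTilde {G : Type*} [Group G] (g : G) : MonoidAlgebra ℂ G :=
  ((orderOf g : ℂ))⁻¹ • ∑ j ∈ Finset.range (orderOf g),
    (((omegaC (orderOf g)) ^ ((orderOf g + 1) / 2)) ^ (j + 1))⁻¹ •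
      MonoidAlgebra.single (g ^ (j + 1)) (1 : ℂ)

/-- The positive cycle `c_i` on the block `Λ_i` of `λ`. -/
def cCyc (n : ℕ) (lam : List ℤ) (i : ℕ) : W n :=
  toW n (posCycle (phat lam i) (phat lam (i + 1)))

/-- The negative cycle `d_i` on the block `Λ_i` of `λ`: `c_i w_{0,Λ_i}` if `λ_i` is odd,
the negative `|λ_i|`-cycle if `λ_i` is even. -/
def dCyc (n : ℕ) (lam : List ℤ) (i : ℕ) : W n :=
  if Odd (lam.getD i 0) then cCyc n lam i * toW n (negOn (blk lam i))
  else toW n (negCycle (phat lam i) (phat lam (i + 1)))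

/-- `w_λ = c_1 ⋯ c_a d_{a+1} ⋯ d_{a+b}`, an element of signed cycle type `λ`. -/
def wLam (n : ℕ) (lam : List ℤ) : W n :=
  ((List.range lam.length).map (fun i =>
    if i < posCount lam then cCyc n lam i else dCyc n lam i)).prod

/-- The function underlying `y_i`, which switches the consecutive blocks `Λ_i` and `Λ_{i+1}`. -/
def yFun (lam : List ℤ) (i : ℕ) : ℤ → ℤ := oddify fun a =>
  if a ∈ blk lam i then a + ((lam.getD i 0).natAbs : ℤ)
  else if a ∈ blk lam (i + 1) then a - ((lam.getD i 0).natAbs : ℤ) else a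

def yW (n : ℕ) (lam : List ℤ) (i : ℕ) : W n := toW n (permOfFun (yFun lam i))

/-- The factor `f_i` of `ẽ_λ`. -/
def fElt (n : ℕ) (lam : List ℤ) (i : ℕ) : MonoidAlgebra ℂ (W n) :=
  if i < posCount lam then epsP n (blk lam i) true * zeta (cCyc n lam i)
  else if Odd (lam.getD i 0) then epsP n (blk lam i) false * zetaTilde (cCyc n lam i)
  else zeta (dCyc n lam i)

/-- `ẽ_λ = x_{|λ|} f_1 ⋯ f_{a+b}`. -/
def eTilde (n : ℕ) (lam : List ℤ) : MonoidAlgebra ℂ (W n) :=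
  xp n (absList lam) * ((List.range lam.length).map (fElt n lam)).prod

/-- The right ideal `e · ℂG`, as a right `ℂG`-submodule (i.e. a `(ℂG)ᵐᵒᵖ`-submodule) of `ℂG`. -/
def rIdeal {G : Type*} [Group G] (e : MonoidAlgebra ℂ G) :
    Submodule (MonoidAlgebra ℂ G)ᵐᵒᵖ (MonoidAlgebra ℂ G) where
  carrier := {x | ∃ y, x = e * y}
  add_mem' := by
    rintro x₁ x₂ ⟨y₁, h₁⟩ ⟨y₂, h₂⟩
    exact ⟨y₁ + y₂, by rw [h₁, h₂, mul_add]⟩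
  zero_mem' := ⟨0, (mul_zero e).symm⟩
  smul_mem' := by
    rintro r x ⟨y, h⟩
    exact ⟨y * r.unop, by rw [MulOpposite.smul_eq_mul_unop, h, mul_assoc]⟩

/-- The right ideal `e · ℂG`, as a ℂ-subspace of `ℂG`. -/
def rIdealC {G : Type*} [Group G] (e : MonoidAlgebra ℂ G) :
    Submodule ℂ (MonoidAlgebra ℂ G) where
  carrier := {x | ∃ y, x = e * y}
  add_mem' := by
    rintro x₁ x₂ ⟨y₁, h₁⟩ ⟨y₂, h₂⟩
    exact ⟨y₁ + y₂, by rw [h₁, h₂, mul_add]⟩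
  zero_mem' := ⟨0, (mul_zero e).symm⟩
  smul_mem' := by
    rintro c x ⟨y, h⟩
    exact ⟨c • y, by rw [h, mul_smul_comm]⟩

lemma rIdealC_mul_mem {G : Type*} [Group G] {e x : MonoidAlgebra ℂ G}
    (hx : x ∈ rIdealC e) (y : MonoidAlgebra ℂ G) : x * y ∈ rIdealC e := by
  obtain ⟨z, hz⟩ := hx
  exact ⟨z * y, by rw [hz, mul_assoc]⟩

open scoped Classical in
/-- The characteristic function `u_μ` of the conjugacy class of `w_μ`,
i.e. of the conjugacy class of signed cycle type `μ`. -/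
def uFun (n : ℕ) (mu : List ℤ) : W n → ℂ := fun g => if IsConj (wLam n mu) g then 1 else 0

open scoped Classical in
/-- The character of `W n` induced from the function `φ` on the subset `S` (viewed as the
extension of `φ` by zero outside `S`): `(1/|S|) Σ_{x ∈ W n} φ̇(x⁻¹ g x)`. -/
def indCharOn (n : ℕ) (S : Set (W n)) (φ : W n → ℂ) (g : W n) : ℂ :=
  (Nat.card S : ℂ)⁻¹ * ∑ᶠ x : W n, if x⁻¹ * g * x ∈ S then φ (x⁻¹ * g * x) else 0

/-- The usual inner product of class functions on `W n`. -/
def innerCF (n : ℕ) (φ ψ : W n → ℂ) : ℂ :=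
  (Nat.card (W n) : ℂ)⁻¹ * ∑ᶠ w : W n, φ w * (starRingEnd ℂ) (ψ w)

end HypOct
namespace HypOct

/-- `(J_1, …, J_k)` is an ordered set partition of `[n]` with `|J_i| = |p_i|` for all `i`. -/
def IsOSP (n : ℕ) (p : List ℤ) (J : List (Finset ℤ)) : Prop :=
  J.length = p.length ∧
  (∀ i < p.length, (J.getD i ∅).card = (p.getD i 0).natAbs) ∧
  (∀ i < p.length, ∀ j < p.length, i ≠ j → Disjoint (J.getD i ∅) (J.getD j ∅)) ∧
  J.foldr (· ∪ ·) ∅ = Finset.Icc (1 : ℤ) (n : ℤ)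

/-- The function underlying `w_{(J_1, …, J_k)}`, mapping the block `P_i`
order-preservingly onto `J_i`. -/
def ospFun (p : List ℤ) (J : List (Finset ℤ)) : ℤ → ℤ := oddify fun a =>
  match (List.range p.length).find?
      (fun i => decide ((phat p i : ℤ) < a ∧ a ≤ (phat p (i + 1) : ℤ))) with
  | some i => ((J.getD i ∅).sort (· ≤ ·)).getD (a - (phat p i : ℤ) - 1).toNat 0
  | none => a

/-- `w_{(J_1, …, J_k)} ∈ S_n ⊆ W_n`. -/
def wOSP (n : ℕ) (p : List ℤ) (J : List (Finset ℤ)) : W n := toW n (permOfFun (ospFun p J))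

/-! ### Basic API -/

lemma permOfFun_coe {f : ℤ → ℤ} (e : Perm') (he : ⇑e = f) : ⇑(permOfFun f) = f := by
  have h : ∃ e : Perm', ⇑e = f := ⟨e, he⟩
  rw [permOfFun, dif_pos h]
  exact h.choose_spec

lemma oddify_pos (f : ℤ → ℤ) {a : ℤ} (ha : 0 < a) : oddify f a = f a := by
  simp [oddify, ha]

lemma oddify_zero (f : ℤ → ℤ) : oddify f 0 = 0 := by simp [oddify]

lemma oddify_neg (f : ℤ → ℤ) (a : ℤ) : oddify f (-a) = -(oddify f a) := by
  rcases lt_trichotomy 0 a with h | h | h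
  · simp [oddify, h, not_lt.2 h.le, neg_pos, not_lt.2 (neg_nonpos_of_nonneg h.le)]
  · simp [oddify, ← h]
  · simp [oddify, h, neg_pos.2 h, not_lt.2 h.le]

lemma oddify_involutive {f : ℤ → ℤ} (hpos : ∀ a, 0 < a → 0 < f a)
    (hinv : ∀ a, 0 < a → f (f a) = a) : Function.Involutive (oddify f) := by
  intro a
  rcases lt_trichotomy 0 a with h | h | h
  · rw [oddify_pos _ h, oddify_pos _ (hpos a h), hinv a h]
  · rw [← h, oddify_zero, oddify_zero]
  · have h2 : (0:ℤ) < -a := by omega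
    have e1 : oddify f a = -(f (-a)) := by simp [oddify, h, not_lt.2 h.le]
    rw [e1, oddify_neg f (f (-a)), oddify_pos _ (hpos _ h2), hinv _ h2, neg_neg]

lemma negOnFun_mem {P : Finset ℤ} {a : ℤ} (h : a ∈ P ∨ -a ∈ P) : negOnFun P a = -a := by
  simp [negOnFun, h]

lemma negOnFun_not_mem {P : Finset ℤ} {a : ℤ} (h : ¬(a ∈ P ∨ -a ∈ P)) : negOnFun P a = a := by
  simp only [negOnFun, if_neg h]

lemma negOnFun_involutive (P : Finset ℤ) : Function.Involutive (negOnFun P) := by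
  intro a
  by_cases h : a ∈ P ∨ -a ∈ P
  · have h' : -a ∈ P ∨ -(-a) ∈ P := by rwa [neg_neg, Or.comm]
    rw [negOnFun_mem h, negOnFun_mem h', neg_neg]
  · rw [negOnFun_not_mem h, negOnFun_not_mem h]

lemma negOn_coe (P : Finset ℤ) : ⇑(negOn P) = negOnFun P :=
  permOfFun_coe ((negOnFun_involutive P).toPerm _) rfl

/-! ### W n API -/

lemma mem_W_iff {n : ℕ} {e : Perm'} :
    e ∈ W n ↔ (∀ a : ℤ, e (-a) = -(e a)) ∧ ∀ a : ℤ, (n : ℤ) < |a| → e a = a := Iff.rfl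

lemma W.odd {n : ℕ} (w : W n) (a : ℤ) : (w : Perm') (-a) = -((w : Perm') a) := w.2.1 a

lemma W.fix {n : ℕ} (w : W n) {a : ℤ} (h : (n : ℤ) < |a|) : (w : Perm') a = a := w.2.2 a h

lemma W.map_zero {n : ℕ} (w : W n) : (w : Perm') 0 = 0 := by
  have := W.odd w 0
  rw [neg_zero] at this
  omega

lemma W.abs_le {n : ℕ} (w : W n) {a : ℤ} (h : |a| ≤ n) : |(w : Perm') a| ≤ n := by
  by_contra hc
  push_neg at hc
  have h2 : (w⁻¹ : W n).1 ((w : Perm') a) = (w : Perm') a :=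
    W.fix (w⁻¹) hc
  have h3 : (w⁻¹ : W n).1 ((w : Perm') a) = a := by
    have he : ((w⁻¹ : W n) : Perm') = (w : Perm')⁻¹ := rfl
    rw [he]
    exact Equiv.symm_apply_apply _ _
  rw [h3] at h2
  rw [← h2] at hc
  exact absurd h (not_le.2 hc)

lemma W.inj {n : ℕ} (w : W n) {a b : ℤ} (h : (w : Perm') a = (w : Perm') b) : a = b :=
  (w : Perm').injective h

lemma W.ne_zero {n : ℕ} (w : W n) {a : ℤ} (h : a ≠ 0) : (w : Perm') a ≠ 0 := by
  intro hc
  exact h (W.inj w (by rw [hc, W.map_zero]))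

lemma W.coe_mul {n : ℕ} (w v : W n) (a : ℤ) :
    ((w * v : W n) : Perm') a = (w : Perm') ((v : Perm') a) := rfl

lemma toW_coe {n : ℕ} {e : Perm'} (h : e ∈ W n) : ((toW n e : W n) : Perm') = e := by
  rw [toW, dif_pos h]

/-- `W n` is a finite group. -/
instance W.finite (n : ℕ) : Finite (W n) := by
  classical
  have : Function.Injective (fun (w : W n) =>
      (fun a : Finset.Icc (-(n:ℤ)) n => (⟨(w : Perm') a.1, by
        have h1 : |(a : ℤ)| ≤ n := by
          have h0 := a.2
          rw [Finset.mem_Icc] at h0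
          exact _root_.abs_le.2 h0
        exact Finset.mem_Icc.2 (_root_.abs_le.1 (W.abs_le w h1))⟩ : Finset.Icc (-(n:ℤ)) n)) ) := by
    intro w v h
    ext a
    · rcases le_or_gt |a| (n : ℤ) with ha | ha
      · have := congrFun h ⟨a, Finset.mem_Icc.2 (_root_.abs_le.1 ha)⟩
        simpa using congrArg Subtype.val this
      · rw [W.fix w ha, W.fix v ha]
  exact Finite.of_injective _ this


/-! ### The length statistic -/

def cpair (f : ℤ → ℤ) (x : ℤ × ℤ) : ℕ :=
  (if x.1 < x.2 ∧ f x.2 < f x.1 then 1 else 0) +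
  (if x.1 ≤ x.2 ∧ f x.2 < -f x.1 then 1 else 0)

def statF (n : ℕ) (f : ℤ → ℤ) : ℕ :=
  ∑ x ∈ (Finset.Icc (1:ℤ) n) ×ˢ (Finset.Icc (1:ℤ) n), cpair f x

def stat {n : ℕ} (w : W n) : ℕ := statF n ⇑(w : Perm')

lemma cpair_congr {f g : ℤ → ℤ} {i j i' j' : ℤ} (e1 : f i = g i') (e2 : f j = g j')
    (hlt : (i < j) ↔ (i' < j')) (hle : (i ≤ j) ↔ (i' ≤ j')) :
    cpair f (i, j) = cpair g (i', j') := by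
  simp only [cpair]
  rw [e1, e2]
  simp only [hlt, hle]

lemma statF_split (n : ℕ) (g : ℤ → ℤ) (T : Finset (ℤ × ℤ))
    (hTs : T ⊆ (Finset.Icc (1:ℤ) n) ×ˢ (Finset.Icc (1:ℤ) n)) :
    statF n g = ∑ x ∈ ((Finset.Icc (1:ℤ) n) ×ˢ (Finset.Icc (1:ℤ) n)) \ T, cpair g x
      + ∑ x ∈ T, cpair g x := by
  rw [statF, ← Finset.sum_sdiff hTs]

/-- Local move: negating the value at a single position `a`. -/
lemma statF_flip (n : ℕ) {f f' : ℤ → ℤ} {a : ℤ} (ha : 1 ≤ a) (han : a ≤ (n : ℤ))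
    (h1 : f' a = -f a) (h2 : ∀ x, 1 ≤ x → x ≤ (n : ℤ) → x ≠ a → f' x = f x) :
    statF n f' + ∑ i ∈ Finset.Icc (1:ℤ) a, cpair f (i, a)
    = statF n f + ∑ i ∈ Finset.Icc (1:ℤ) a, cpair f' (i, a) := by
  classical
  set T : Finset (ℤ × ℤ) := Finset.image (fun i => (i, a)) (Finset.Icc (1:ℤ) a) with hT
  have hTs : T ⊆ (Finset.Icc (1:ℤ) n) ×ˢ (Finset.Icc (1:ℤ) n) := by
    intro x hx
    simp only [hT, Finset.mem_image, Finset.mem_Icc] at hx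
    obtain ⟨i, hi, rfl⟩ := hx
    simp only [Finset.mem_product, Finset.mem_Icc]
    omega
  have hinj : Set.InjOn (fun i => ((i, a) : ℤ × ℤ)) (Finset.Icc (1:ℤ) a) := by
    intro x _ y _ h
    exact congrArg Prod.fst h
  have hTsum : ∀ g : ℤ → ℤ, ∑ x ∈ T, cpair g x = ∑ i ∈ Finset.Icc (1:ℤ) a, cpair g (i, a) := by
    intro g
    rw [hT, Finset.sum_image (fun x hx y hy h => hinj hx hy h)]
  have hmid : ∀ x ∈ ((Finset.Icc (1:ℤ) n) ×ˢ (Finset.Icc (1:ℤ) n)) \ T,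
      cpair f' x = cpair f x := by
    rintro ⟨i, j⟩ hx
    simp only [Finset.mem_sdiff, Finset.mem_product, Finset.mem_Icc, hT,
      Finset.mem_image, not_exists] at hx
    obtain ⟨⟨⟨hi1, hi2⟩, hj1, hj2⟩, hnt⟩ := hx
    have hnt' : ¬(j = a ∧ i ≤ a) := by
      rintro ⟨rfl, hia⟩
      exact hnt i (by simp [Finset.mem_Icc]; omega)
    by_cases hj : j = a
    · have hi : a < i := by
        rcases le_or_gt i a with h | h
        · exact absurd ⟨hj, h⟩ hnt'
        · exact h
      simp only [cpair]
      rw [if_neg (by rintro ⟨h, -⟩; omega), if_neg (by rintro ⟨h, -⟩; omega),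
        if_neg (by rintro ⟨h, -⟩; omega), if_neg (by rintro ⟨h, -⟩; omega)]
    · by_cases hi : i = a
      · rcases lt_or_gt_of_ne (fun h => hj h.symm : a ≠ j) with hij | hij
        · have e2 : f' j = f j := h2 j hj1 hj2 hj
          have e1' : f' i = -f i := by rw [hi]; exact h1
          have hij' : i < j := by omega
          simp only [cpair, e2, e1', neg_neg]
          by_cases c1 : f j < f i
          all_goals by_cases c2 : f j < -f i
          all_goals simp only [c1, c2, eq_true hij', eq_true hij'.le, true_and, and_true,
            and_false, if_true, if_false]
          all_goals omega
        · simp only [cpair]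
          rw [if_neg (by rintro ⟨h, -⟩; omega), if_neg (by rintro ⟨h, -⟩; omega),
            if_neg (by rintro ⟨h, -⟩; omega), if_neg (by rintro ⟨h, -⟩; omega)]
      · exact cpair_congr (h2 i hi1 hi2 hi) (h2 j hj1 hj2 hj) Iff.rfl Iff.rfl
  have e3 : ∑ x ∈ ((Finset.Icc (1:ℤ) n) ×ˢ (Finset.Icc (1:ℤ) n)) \ T, cpair f' x
      = ∑ x ∈ ((Finset.Icc (1:ℤ) n) ×ˢ (Finset.Icc (1:ℤ) n)) \ T, cpair f x :=
    Finset.sum_congr rfl hmid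
  rw [statF_split n f T hTs, statF_split n f' T hTs, hTsum f, hTsum f', e3]
  omega

def tauSwap (a : ℤ) : ℤ → ℤ := fun x => if x = a then a + 1 else if x = a + 1 then a else x

lemma tauSwap_left (a : ℤ) : tauSwap a a = a + 1 := by simp [tauSwap]

lemma tauSwap_right (a : ℤ) : tauSwap a (a + 1) = a := by simp [tauSwap]

lemma tauSwap_other (a : ℤ) {x : ℤ} (h1 : x ≠ a) (h2 : x ≠ a + 1) : tauSwap a x = x := by
  simp [tauSwap, h1, h2]

lemma tauSwap_invol (a : ℤ) (x : ℤ) : tauSwap a (tauSwap a x) = x := by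
  by_cases h1 : x = a
  · subst h1; rw [tauSwap_left, tauSwap_right]
  · by_cases h2 : x = a + 1
    · subst h2; rw [tauSwap_right, tauSwap_left]
    · rw [tauSwap_other a h1 h2, tauSwap_other a h1 h2]

/-- Local move: swapping the values at adjacent positions `a`, `a+1`. -/
lemma statF_swap (n : ℕ) {f f' : ℤ → ℤ} {a : ℤ} (ha : 1 ≤ a) (han : a + 1 ≤ (n : ℤ))
    (h1 : f' a = f (a + 1)) (h2 : f' (a + 1) = f a)
    (h3 : ∀ x, 1 ≤ x → x ≤ (n : ℤ) → x ≠ a → x ≠ a + 1 → f' x = f x) :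
    statF n f' + (if f (a + 1) < f a then 1 else 0)
    = statF n f + (if f a < f (a + 1) then 1 else 0) := by
  classical
  set T : Finset (ℤ × ℤ) := {(a, a + 1), (a + 1, a)} with hT
  have hTs : T ⊆ (Finset.Icc (1:ℤ) n) ×ˢ (Finset.Icc (1:ℤ) n) := by
    intro x hx
    simp only [hT, Finset.mem_insert, Finset.mem_singleton] at hx
    rcases hx with rfl | rfl <;> simp only [Finset.mem_product, Finset.mem_Icc] <;> omega
  -- the key reindexed equality on the complement
  have hmid : ∑ x ∈ ((Finset.Icc (1:ℤ) n) ×ˢ (Finset.Icc (1:ℤ) n)) \ T, cpair f' x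
      = ∑ x ∈ ((Finset.Icc (1:ℤ) n) ×ˢ (Finset.Icc (1:ℤ) n)) \ T, cpair f x := by
    apply Finset.sum_bij' (fun (x : ℤ × ℤ) _ => ((tauSwap a x.1, tauSwap a x.2) : ℤ × ℤ))
      (fun (x : ℤ × ℤ) _ => ((tauSwap a x.1, tauSwap a x.2) : ℤ × ℤ))
    · -- membership forward
      rintro ⟨i, j⟩ hx
      simp only [Finset.mem_sdiff, Finset.mem_product, Finset.mem_Icc, hT,
        Finset.mem_insert, Finset.mem_singleton, Prod.mk.injEq, not_or, not_and] at hx ⊢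
      obtain ⟨⟨⟨hi1, hi2⟩, hj1, hj2⟩, hnt1, hnt2⟩ := hx
      refine ⟨⟨⟨?_, ?_⟩, ?_, ?_⟩, ?_, ?_⟩
      · simp only [tauSwap]; split <;> [omega; skip]; split <;> omega
      · simp only [tauSwap]; split <;> [omega; skip]; split <;> omega
      · simp only [tauSwap]; split <;> [omega; skip]; split <;> omega
      · simp only [tauSwap]; split <;> [omega; skip]; split <;> omega
      · intro hia
        -- tauSwap a i = a means i = a+1 ; then tauSwap a j ≠ a+1 means j ≠ a
        intro hja
        simp only [tauSwap] at hia hja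
        revert hia hja
        split <;> [omega; skip]
        split <;> [skip; omega]
        · intro h'
          split <;> [omega; skip]
          split <;> omega
      · intro hia hja
        simp only [tauSwap] at hia hja
        revert hia hja
        split
        · intro h'
          split <;> [omega; skip]
          split <;> omega
        · omega
    · -- membership backward (same map)
      rintro ⟨i, j⟩ hx
      simp only [Finset.mem_sdiff, Finset.mem_product, Finset.mem_Icc, hT,
        Finset.mem_insert, Finset.mem_singleton, Prod.mk.injEq, not_or, not_and] at hx ⊢
      obtain ⟨⟨⟨hi1, hi2⟩, hj1, hj2⟩, hnt1, hnt2⟩ := hx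
      refine ⟨⟨⟨?_, ?_⟩, ?_, ?_⟩, ?_, ?_⟩
      · simp only [tauSwap]; split <;> [omega; skip]; split <;> omega
      · simp only [tauSwap]; split <;> [omega; skip]; split <;> omega
      · simp only [tauSwap]; split <;> [omega; skip]; split <;> omega
      · simp only [tauSwap]; split <;> [omega; skip]; split <;> omega
      · intro hia hja
        simp only [tauSwap] at hia hja
        revert hia hja
        split <;> [omega; skip]
        split <;> [skip; omega]
        · intro h'
          split <;> [omega; skip]
          split <;> omega
      · intro hia hja
        simp only [tauSwap] at hia hja
        revert hia hja
        split
        · intro h'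
          split <;> [omega; skip]
          split <;> omega
        · omega
    · rintro ⟨i, j⟩ _
      simp only [tauSwap_invol]
    · rintro ⟨i, j⟩ _
      simp only [tauSwap_invol]
    · -- the value equality
      rintro ⟨i, j⟩ hx
      simp only [Finset.mem_sdiff, Finset.mem_product, Finset.mem_Icc, hT,
        Finset.mem_insert, Finset.mem_singleton, Prod.mk.injEq, not_and] at hx
      obtain ⟨⟨⟨hi1, hi2⟩, hj1, hj2⟩, hnt⟩ := hx
      rw [not_or, not_and, not_and] at hnt
      obtain ⟨hnt1, hnt2⟩ := hnt
      show cpair f' (i, j) = cpair f (tauSwap a i, tauSwap a j)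
      by_cases hia : i = a
      · by_cases hja : j = a
        · -- (a, a) ↦ (a+1, a+1)
          refine cpair_congr ?_ ?_ (by rw [hia, hja, tauSwap_left]; omega)
            (by rw [hia, hja, tauSwap_left]; omega)
          · rw [hia, tauSwap_left, h1]
          · rw [hja, tauSwap_left, h1]
        · by_cases hja1 : j = a + 1
          · exact absurd hja1 (hnt1 hia)
          · refine cpair_congr ?_ ?_ (by rw [hia, tauSwap_left, tauSwap_other a hja hja1]; omega)
              (by rw [hia, tauSwap_left, tauSwap_other a hja hja1]; omega)
            · rw [hia, tauSwap_left, h1]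
            · rw [tauSwap_other a hja hja1, h3 j hj1 hj2 hja hja1]
      · by_cases hia1 : i = a + 1
        · by_cases hja : j = a
          · exact absurd hja (hnt2 hia1)
          · by_cases hja1 : j = a + 1
            · refine cpair_congr ?_ ?_ (by rw [hia1, hja1, tauSwap_right]; omega)
                (by rw [hia1, hja1, tauSwap_right]; omega)
              · rw [hia1, tauSwap_right, h2]
              · rw [hja1, tauSwap_right, h2]
            · refine cpair_congr ?_ ?_
                (by rw [hia1, tauSwap_right, tauSwap_other a hja hja1]; omega)
                (by rw [hia1, tauSwap_right, tauSwap_other a hja hja1]; omega)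
              · rw [hia1, tauSwap_right, h2]
              · rw [tauSwap_other a hja hja1, h3 j hj1 hj2 hja hja1]
        · by_cases hja : j = a
          · refine cpair_congr ?_ ?_
              (by rw [hja, tauSwap_left, tauSwap_other a hia hia1]; omega)
              (by rw [hja, tauSwap_left, tauSwap_other a hia hia1]; omega)
            · rw [tauSwap_other a hia hia1, h3 i hi1 hi2 hia hia1]
            · rw [hja, tauSwap_left, h1]
          · by_cases hja1 : j = a + 1
            · refine cpair_congr ?_ ?_
                (by rw [hja1, tauSwap_right, tauSwap_other a hia hia1]; omega)
                (by rw [hja1, tauSwap_right, tauSwap_other a hia hia1]; omega)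
              · rw [tauSwap_other a hia hia1, h3 i hi1 hi2 hia hia1]
              · rw [hja1, tauSwap_right, h2]
            · refine cpair_congr ?_ ?_
                (by rw [tauSwap_other a hia hia1, tauSwap_other a hja hja1])
                (by rw [tauSwap_other a hia hia1, tauSwap_other a hja hja1])
              · rw [tauSwap_other a hia hia1, h3 i hi1 hi2 hia hia1]
              · rw [tauSwap_other a hja hja1, h3 j hj1 hj2 hja hja1]
  -- now assemble
  have hTsum : ∀ g : ℤ → ℤ, ∑ x ∈ T, cpair g x = cpair g (a, a+1) + cpair g (a+1, a) := by
    intro g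
    rw [hT, Finset.sum_insert (by simp only [Finset.mem_singleton, Prod.mk.injEq]; omega),
      Finset.sum_singleton]
  have hz1 : cpair f' (a+1, a) = 0 := by
    simp only [cpair]
    rw [if_neg (by rintro ⟨h, -⟩; omega), if_neg (by rintro ⟨h, -⟩; omega)]
  have hz2 : cpair f (a+1, a) = 0 := by
    simp only [cpair]
    rw [if_neg (by rintro ⟨h, -⟩; omega), if_neg (by rintro ⟨h, -⟩; omega)]
  have hc1 : cpair f' (a, a+1)
      = (if f a < f (a+1) then 1 else 0) + (if f (a+1) < -f a then 1 else 0) := by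
    simp only [cpair, h1, h2]
    congr 1
    · exact if_congr (and_iff_right (by omega)) rfl rfl
    · exact if_congr (Iff.intro (fun h => by omega) (fun h => ⟨by omega, by omega⟩)) rfl rfl
  have hc2 : cpair f (a, a+1)
      = (if f (a+1) < f a then 1 else 0) + (if f (a+1) < -f a then 1 else 0) := by
    simp only [cpair]
    congr 1
    · exact if_congr (and_iff_right (by omega)) rfl rfl
    · exact if_congr (and_iff_right (by omega)) rfl rfl
  rw [statF_split n f T hTs, statF_split n f' T hTs, hTsum f, hTsum f', hmid, hz1, hz2, hc1, hc2]
  omega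

lemma cpair_diag (g : ℤ → ℤ) (x : ℤ) : cpair g (x, x) = if g x < 0 then 1 else 0 := by
  simp only [cpair]
  rw [if_neg (show ¬(x < x ∧ g x < g x) from by rintro ⟨h, -⟩; omega), zero_add]
  exact if_congr (show (x ≤ x ∧ g x < -g x) ↔ (g x < 0) from
    ⟨fun h => by omega, fun h => ⟨le_refl x, by omega⟩⟩) rfl rfl

/-- Flip at position 1 : the `t₁` generator move. -/
lemma statF_flip_one (n : ℕ) {f f' : ℤ → ℤ} (hn : 1 ≤ (n:ℤ))
    (h1 : f' 1 = -f 1) (h2 : ∀ x, 1 ≤ x → x ≤ (n : ℤ) → x ≠ 1 → f' x = f x) :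
    statF n f' + (if f 1 < 0 then 1 else 0) = statF n f + (if 0 < f 1 then 1 else 0) := by
  have h := statF_flip n le_rfl hn h1 h2
  rw [Finset.Icc_self, Finset.sum_singleton, Finset.sum_singleton, cpair_diag, cpair_diag, h1] at h
  rw [h]
  congr 1
  exact if_congr (by omega) rfl rfl

/-- Flip at a position with negative value strictly decreases the statistic. -/
lemma statF_flip_dec (n : ℕ) {f f' : ℤ → ℤ} {a : ℤ} (ha : 1 ≤ a) (han : a ≤ (n : ℤ))
    (hneg : f a < 0)
    (h1 : f' a = -f a) (h2 : ∀ x, 1 ≤ x → x ≤ (n : ℤ) → x ≠ a → f' x = f x) :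
    statF n f' + 1 ≤ statF n f := by
  have h := statF_flip n ha han h1 h2
  have hsplit : ∀ g : ℤ → ℤ, ∑ i ∈ Finset.Icc (1:ℤ) a, cpair g (i, a)
      = ∑ i ∈ Finset.Icc (1:ℤ) (a-1), cpair g (i, a) + cpair g (a, a) := by
    intro g
    have : Finset.Icc (1:ℤ) a = insert a (Finset.Icc (1:ℤ) (a-1)) := by
      ext x; simp only [Finset.mem_Icc, Finset.mem_insert]; omega
    rw [this, Finset.sum_insert (by simp only [Finset.mem_Icc]; omega), add_comm]
  rw [hsplit f, hsplit f', cpair_diag, cpair_diag, h1, if_pos hneg, if_neg (by omega)] at h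
  have hle : ∑ i ∈ Finset.Icc (1:ℤ) (a-1), cpair f' (i, a)
      ≤ ∑ i ∈ Finset.Icc (1:ℤ) (a-1), cpair f (i, a) := by
    apply Finset.sum_le_sum
    intro i hi
    simp only [Finset.mem_Icc] at hi
    have e1 : f' i = f i := h2 i hi.1 (by omega) (by omega)
    simp only [cpair, e1, h1]
    apply add_le_add
    · by_cases c : i < a ∧ -f a < f i
      · rw [if_pos c, if_pos ⟨c.1, by omega⟩]
      · rw [if_neg c]; omega
    · by_cases c : i ≤ a ∧ -f a < -f i
      · rw [if_pos c, if_pos ⟨c.1, by omega⟩]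
      · rw [if_neg c]; omega
  omega

/-! ### Generator elements of `W n` -/

lemma negOn_mem_W {n : ℕ} {P : Finset ℤ} (hP : ∀ x ∈ P, 1 ≤ x ∧ x ≤ (n:ℤ)) :
    negOn P ∈ W n := by
  rw [mem_W_iff, negOn_coe]
  constructor
  · intro a
    by_cases h : a ∈ P ∨ -a ∈ P
    · rw [negOnFun_mem h, negOnFun_mem (by rwa [neg_neg, Or.comm]), neg_neg]
    · rw [negOnFun_not_mem h, negOnFun_not_mem
        (show ¬(-a ∈ P ∨ -(-a) ∈ P) from by rw [neg_neg]; exact fun hc => h hc.symm)]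
  · intro a hab
    rcases lt_abs.1 hab with h' | h'
    · apply negOnFun_not_mem
      rintro (h | h)
      · have := hP a h; omega
      · have := hP (-a) h; omega
    · apply negOnFun_not_mem
      rintro (h | h)
      · have := hP a h; omega
      · have := hP (-a) h; omega

def gflip (n : ℕ) (a : ℤ) : W n := toW n (negOn {a})

lemma gflip_coe {n : ℕ} {a : ℤ} (ha : 1 ≤ a) (han : a ≤ (n:ℤ)) :
    ⇑((gflip n a : W n) : Perm') = negOnFun {a} := by
  rw [gflip, toW_coe (negOn_mem_W (by intro x hx; simp only [Finset.mem_singleton] at hx; omega)),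
    negOn_coe]

def sFunCore (i : ℤ) : ℤ → ℤ := fun a => if a = i then i + 1 else if a = i + 1 then i else a

lemma sFun_invol {i : ℤ} (hi : 1 ≤ i) : Function.Involutive (oddify (sFunCore i)) := by
  apply oddify_involutive
  · intro a ha
    simp only [sFunCore]
    split
    · omega
    · split <;> omega
  · intro a ha
    simp only [sFunCore]
    by_cases h1 : a = i
    · split_ifs <;> omega
    · by_cases h2 : a = i + 1
      · split_ifs <;> omega
      · split_ifs <;> omega

def gswap (n : ℕ) (i : ℤ) : W n := toW n (permOfFun (oddify (sFunCore i)))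

lemma sFun_mem_W {n : ℕ} {i : ℤ} (hi : 1 ≤ i) (hin : i + 1 ≤ (n:ℤ)) :
    permOfFun (oddify (sFunCore i)) ∈ W n := by
  have hcoe : ⇑(permOfFun (oddify (sFunCore i))) = oddify (sFunCore i) :=
    permOfFun_coe ((sFun_invol hi).toPerm _) rfl
  rw [mem_W_iff, hcoe]
  constructor
  · intro a; rw [oddify_neg]
  · intro a hab
    have hab' : (n:ℤ) < a ∨ a < -(n:ℤ) := by
      rcases lt_abs.1 hab with h | h
      · exact Or.inl h
      · right; omega
    rcases lt_or_ge 0 a with h | h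
    · rw [oddify_pos _ h]
      simp only [sFunCore]
      rw [if_neg (by omega), if_neg (by omega)]
    · have h2 : a < 0 := by omega
      have h3 : a = -(-a) := by omega
      rw [h3, oddify_neg, oddify_pos _ (by omega)]
      simp only [sFunCore]
      rw [if_neg (by omega), if_neg (by omega)]

lemma gswap_coe {n : ℕ} {i : ℤ} (hi : 1 ≤ i) (hin : i + 1 ≤ (n:ℤ)) :
    ⇑((gswap n i : W n) : Perm') = oddify (sFunCore i) := by
  rw [gswap, toW_coe (sFun_mem_W hi hin)]
  exact permOfFun_coe ((sFun_invol hi).toPerm _) rfl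

/-! ### stat under generators -/

lemma stat_mul_gflip_one {n : ℕ} (hn : 1 ≤ (n:ℤ)) (w : W n) :
    stat (w * gflip n 1) + (if (w:Perm') 1 < 0 then 1 else 0)
      = stat w + (if 0 < (w:Perm') 1 then 1 else 0) := by
  apply statF_flip_one n hn
  · rw [W.coe_mul, gflip_coe le_rfl hn, negOnFun_mem (Or.inl (Finset.mem_singleton_self 1)),
      W.odd]
  · intro x h1 h2 h3
    rw [W.coe_mul, gflip_coe le_rfl hn,
      negOnFun_not_mem (by simp only [Finset.mem_singleton]; omega)]

lemma stat_mul_gflip_dec {n : ℕ} {a : ℤ} (ha : 1 ≤ a) (han : a ≤ (n:ℤ)) (w : W n)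
    (hneg : (w:Perm') a < 0) :
    stat (w * gflip n a) + 1 ≤ stat w := by
  apply statF_flip_dec n ha han hneg
  · rw [W.coe_mul, gflip_coe ha han, negOnFun_mem (Or.inl (Finset.mem_singleton_self a)),
      W.odd]
  · intro x h1 h2 h3
    rw [W.coe_mul, gflip_coe ha han,
      negOnFun_not_mem (by simp only [Finset.mem_singleton]; omega)]

lemma stat_mul_gswap {n : ℕ} {a : ℤ} (ha : 1 ≤ a) (han : a + 1 ≤ (n:ℤ)) (w : W n) :
    stat (w * gswap n a) + (if (w:Perm') (a+1) < (w:Perm') a then 1 else 0)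
      = stat w + (if (w:Perm') a < (w:Perm') (a+1) then 1 else 0) := by
  apply statF_swap n ha han
  · rw [W.coe_mul, gswap_coe ha han, oddify_pos _ (by omega)]
    simp [sFunCore]
  · rw [W.coe_mul, gswap_coe ha han, oddify_pos _ (by omega)]
    simp [sFunCore, show (a:ℤ) + 1 ≠ a from by omega]
  · intro x h1 h2 h3 h4
    rw [W.coe_mul, gswap_coe ha han, oddify_pos _ (by omega)]
    simp [sFunCore, h3, h4]

/-! ### `len = stat` -/

lemma stat_one {n : ℕ} : stat (1 : W n) = 0 := by
  rw [stat, statF]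
  apply Finset.sum_eq_zero
  rintro ⟨i, j⟩ hx
  simp only [Finset.mem_product, Finset.mem_Icc] at hx
  have hf : ∀ x : ℤ, ((1 : W n) : Perm') x = x := fun x => rfl
  simp only [cpair, hf]
  rw [if_neg (by rintro ⟨h1, h2⟩; omega), if_neg (by rintro ⟨h1, h2⟩; omega)]
  rfl


lemma gflip_mem_genSet {n : ℕ} (hn : 0 < n) : gflip n 1 ∈ genSet n := by
  left
  rw [gflip]
  exact toW_coe (negOn_mem_W (by
    intro x hx
    simp only [Finset.mem_singleton] at hx
    omega))

lemma gswap_mem_genSet {n : ℕ} {i : ℕ} (h1 : 1 ≤ i) (h2 : i + 1 ≤ n) :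
    gswap n (i : ℤ) ∈ genSet n := by
  right
  refine ⟨i, h1, h2, ?_⟩
  rw [gswap]
  exact toW_coe (sFun_mem_W (by exact_mod_cast h1) (by exact_mod_cast h2))

lemma gen_invol {n : ℕ} {g : W n} (hg : g ∈ genSet n) :
    Function.Involutive ⇑(g : Perm') := by
  rcases hg with h | ⟨i, hi1, hi2, h⟩
  · rw [h, negOn_coe]
    exact negOnFun_involutive _
  · rw [h]
    show Function.Involutive ⇑(permOfFun (oddify (sFunCore (i:ℤ))))
    rw [permOfFun_coe (f := oddify (sFunCore (i:ℤ)))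
      ((sFun_invol (i := (i:ℤ)) (by exact_mod_cast hi1)).toPerm _) rfl]
    exact sFun_invol (i := (i:ℤ)) (by exact_mod_cast hi1)

lemma gen_sq {n : ℕ} {g : W n} (hg : g ∈ genSet n) : g * g = 1 := by
  apply Subtype.ext
  rw [OneMemClass.coe_one]
  apply Equiv.ext
  intro x
  rw [Equiv.Perm.one_apply]
  exact gen_invol hg x

lemma gen_coe {n : ℕ} {g : W n} (hg : g ∈ genSet n) :
    ⇑(g : Perm') = negOnFun {1} ∨
      ∃ i : ℕ, 1 ≤ i ∧ i + 1 ≤ n ∧ ⇑(g : Perm') = oddify (sFunCore (i : ℤ)) := by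
  rcases hg with h | ⟨i, hi1, hi2, h⟩
  · left
    rw [h, negOn_coe]
  · right
    refine ⟨i, hi1, hi2, ?_⟩
    rw [h]
    show ⇑(permOfFun (oddify (sFunCore (i:ℤ)))) = _
    exact permOfFun_coe (f := oddify (sFunCore (i:ℤ)))
      ((sFun_invol (i := (i:ℤ)) (by exact_mod_cast hi1)).toPerm _) rfl

lemma stat_mul_gen_le {n : ℕ} (hn : 0 < n) (w : W n) {g : W n} (hg : g ∈ genSet n) :
    stat (w * g) ≤ stat w + 1 := by
  have hn' : (1:ℤ) ≤ (n:ℤ) := by exact_mod_cast hn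
  rcases gen_coe hg with h | ⟨i, hi1, hi2, h⟩
  · have hwg : w * g = w * gflip n 1 := by
      congr 1
      apply Subtype.ext
      apply Equiv.ext
      intro x
      have := congrFun h x
      rw [this]
      rw [← gflip_coe le_rfl hn']
    rw [hwg]
    have hst := stat_mul_gflip_one hn' w
    by_cases hc : ((w : Perm') 1) < 0
    · rw [if_pos hc, if_neg (by omega)] at hst; omega
    · rw [if_neg hc] at hst
      by_cases hc2 : 0 < ((w : Perm') 1)
      · rw [if_pos hc2] at hst; omega
      · rw [if_neg hc2] at hst; omega
  · have hi1' : (1:ℤ) ≤ (i:ℤ) := by exact_mod_cast hi1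
    have hi2' : (i:ℤ) + 1 ≤ (n:ℤ) := by exact_mod_cast hi2
    have hwg : w * g = w * gswap n (i:ℤ) := by
      congr 1
      apply Subtype.ext
      apply Equiv.ext
      intro x
      have := congrFun h x
      rw [this, ← gswap_coe hi1' hi2']
    rw [hwg]
    have hst := stat_mul_gswap hi1' hi2' w
    by_cases hc : ((w : Perm') ((i:ℤ)+1)) < ((w : Perm') (i:ℤ))
    · rw [if_pos hc, if_neg (by omega)] at hst; omega
    · rw [if_neg hc] at hst
      by_cases hc2 : ((w : Perm') (i:ℤ)) < ((w : Perm') ((i:ℤ)+1))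
      · rw [if_pos hc2] at hst; omega
      · rw [if_neg hc2] at hst; omega

lemma stat_prod_le {n : ℕ} (hn : 0 < n) (l : List (W n)) (hl : ∀ g ∈ l, g ∈ genSet n) :
    stat l.prod ≤ l.length := by
  induction l using List.reverseRecOn with
  | nil => simp [stat_one]
  | append_singleton l g ih =>
    rw [List.prod_append, List.prod_singleton, List.length_append, List.length_singleton]
    have h1 := stat_mul_gen_le hn l.prod (hl g (by simp))
    have h2 := ih (fun x hx => hl x (by simp [hx]))
    omega

lemma eq_one_of_incr {n : ℕ} (hn : 0 < n) (w : W n)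
    (hpos : 0 < (w : Perm') 1)
    (hmono : ∀ a : ℤ, 1 ≤ a → a + 1 ≤ (n:ℤ) → (w : Perm') a < (w : Perm') (a+1)) :
    w = 1 := by
  set f : ℤ → ℤ := ⇑(w : Perm') with hf
  have hlt : ∀ a b : ℤ, 1 ≤ a → a < b → b ≤ (n:ℤ) → f a < f b := by
    intro a b ha hab hbn
    have key : ∀ t : ℕ, ∀ b : ℤ, b = a + 1 + t → b ≤ (n:ℤ) → f a < f b := by
      intro t
      induction t with
      | zero =>
        intro b hb hbn
        have hb' : b = a + 1 := by omega
        rw [hb']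
        exact hmono a ha (by omega)
      | succ t ih =>
        intro b hb hbn
        have h1 : f a < f (b - 1) := ih (b - 1) (by omega) (by omega)
        have h2 : f (b - 1) < f b := by
          have h3 := hmono (b - 1) (by omega) (by omega)
          have e : b - 1 + 1 = b := by omega
          rwa [e] at h3
        omega
    exact key (b - a - 1).toNat b (by omega) hbn
  have hfb1 : ∀ b : ℤ, 1 ≤ b → b ≤ (n:ℤ) → 1 ≤ f b := by
    intro b hb1 hb2
    rcases eq_or_lt_of_le hb1 with h | h
    · rw [← h]; omega
    · have := hlt 1 b le_rfl h hb2
      omega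
  have hfbn : ∀ b : ℤ, 1 ≤ b → b ≤ (n:ℤ) → f b ≤ (n:ℤ) := by
    intro b hb1 hb2
    have habs : |b| ≤ (n:ℤ) := by rw [abs_of_pos (by omega)]; omega
    have h4 : |f b| ≤ (n:ℤ) := W.abs_le w habs
    have h5 := le_abs_self (f b)
    omega
  have key : ∀ a : ℤ, 1 ≤ a → a ≤ (n:ℤ) → f a = a := by
    intro a h1 h2
    have c1 : (Finset.Icc (1:ℤ) a).card ≤ (Finset.Icc (1:ℤ) (f a)).card := by
      apply Finset.card_le_card_of_injOn f
      · intro b hb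
        simp only [Finset.mem_coe, Finset.mem_Icc] at hb ⊢
        refine ⟨hfb1 b hb.1 (by omega), ?_⟩
        rcases eq_or_lt_of_le hb.2 with h | h
        · rw [h]
        · have := hlt b a hb.1 h h2; omega
      · intro x _ y _ h
        exact W.inj w h
    have c2 : (Finset.Icc a (n:ℤ)).card ≤ (Finset.Icc (f a) (n:ℤ)).card := by
      apply Finset.card_le_card_of_injOn f
      · intro b hb
        simp only [Finset.mem_coe, Finset.mem_Icc] at hb ⊢
        refine ⟨?_, hfbn b (by omega) hb.2⟩
        rcases eq_or_lt_of_le hb.1 with h | h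
        · rw [← h]
        · have := hlt a b (by omega) h hb.2; omega
      · intro x _ y _ h
        exact W.inj w h
    rw [Int.card_Icc, Int.card_Icc] at c1 c2
    omega
  apply Subtype.ext
  rw [OneMemClass.coe_one]
  apply Equiv.ext
  intro x
  rw [Equiv.Perm.one_apply]
  rcases lt_trichotomy x 0 with hx | hx | hx
  · rcases le_or_gt (-x) (n:ℤ) with h | h
    · have e : f (-(-x)) = -(f (-x)) := W.odd w (-x)
      rw [neg_neg] at e
      show f x = x
      rw [e, key (-x) (by omega) h, neg_neg]
    · exact W.fix w (by rcases abs_cases x with ⟨e, _⟩ | ⟨e, _⟩ <;> omega)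
  · rw [hx]
    exact W.map_zero w
  · rcases le_or_gt x (n:ℤ) with h | h
    · exact key x (by omega) h
    · exact W.fix w (by rcases abs_cases x with ⟨e, _⟩ | ⟨e, _⟩ <;> omega)

lemma exists_word {n : ℕ} (hn : 0 < n) (w : W n) :
    ∃ l : List (W n), (∀ g ∈ l, g ∈ genSet n) ∧ l.prod = w ∧ l.length = stat w := by
  have hn' : (1:ℤ) ≤ (n:ℤ) := by exact_mod_cast hn
  generalize hk : stat w = k
  induction k using Nat.strong_induction_on generalizing w with
  | _ k ih =>
  by_cases hdesc : ∃ a : ℕ, 1 ≤ a ∧ a + 1 ≤ n ∧ (w : Perm') ((a:ℤ)+1) < (w : Perm') (a:ℤ)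
  · obtain ⟨a, ha1, ha2, ha3⟩ := hdesc
    have ha1' : (1:ℤ) ≤ (a:ℤ) := by exact_mod_cast ha1
    have ha2' : (a:ℤ) + 1 ≤ (n:ℤ) := by exact_mod_cast ha2
    have hst := stat_mul_gswap ha1' ha2' w
    rw [if_pos ha3, if_neg (by omega)] at hst
    have hlt : stat (w * gswap n (a:ℤ)) < k := by omega
    obtain ⟨l, hl1, hl2, hl3⟩ := ih _ hlt (w * gswap n (a:ℤ)) rfl
    refine ⟨l ++ [gswap n (a:ℤ)], ?_, ?_, ?_⟩
    · intro g hg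
      rcases List.mem_append.1 hg with h | h
      · exact hl1 g h
      · rw [List.mem_singleton.1 h]
        exact gswap_mem_genSet ha1 ha2
    · rw [List.prod_append, List.prod_singleton, hl2, mul_assoc,
        gen_sq (gswap_mem_genSet ha1 ha2), mul_one]
    · rw [List.length_append, List.length_singleton, hl3]
      omega
  · push_neg at hdesc
    by_cases hneg : (w : Perm') 1 < 0
    · have hst := stat_mul_gflip_one hn' w
      rw [if_pos hneg, if_neg (by omega)] at hst
      have hlt : stat (w * gflip n 1) < k := by omega
      obtain ⟨l, hl1, hl2, hl3⟩ := ih _ hlt (w * gflip n 1) rfl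
      refine ⟨l ++ [gflip n 1], ?_, ?_, ?_⟩
      · intro g hg
        rcases List.mem_append.1 hg with h | h
        · exact hl1 g h
        · rw [List.mem_singleton.1 h]
          exact gflip_mem_genSet hn
      · rw [List.prod_append, List.prod_singleton, hl2, mul_assoc,
          gen_sq (gflip_mem_genSet hn), mul_one]
      · rw [List.length_append, List.length_singleton, hl3]
        omega
    · -- no descent, positive start: w = 1
      have hmono : ∀ a : ℤ, 1 ≤ a → a + 1 ≤ (n:ℤ) → (w : Perm') a < (w : Perm') (a+1) := by
        intro a ha1 ha2
        have ha' : a = ((a.toNat : ℕ) : ℤ) := by omega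
        have h := hdesc a.toNat (by omega) (by omega)
        rw [← ha'] at h
        have hne : (w : Perm') a ≠ (w : Perm') (a+1) := fun hc => by
          have := W.inj w hc; omega
        omega
      have hpos : 0 < (w : Perm') 1 := by
        have := W.ne_zero w (show (1:ℤ) ≠ 0 from by omega)
        omega
      have hw1 : w = 1 := eq_one_of_incr hn w hpos hmono
      refine ⟨[], by simp, by simp [hw1], ?_⟩
      rw [← hk, hw1, stat_one]
      rfl

lemma len_eq_stat {n : ℕ} (hn : 0 < n) (w : W n) : len n w = stat w := by
  obtain ⟨l, h1, h2, h3⟩ := exists_word hn w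
  apply le_antisymm
  · exact Nat.sInf_le ⟨l, h3, h1, h2⟩
  · refine le_csInf ⟨stat w, ⟨l, h3, h1, h2⟩⟩ ?_
    rintro k ⟨l', hl1, hl2, hl3⟩
    rw [← hl1]
    calc stat w = stat l'.prod := by rw [hl3]
    _ ≤ l'.length := stat_prod_le hn l' hl2

/-! ### Blocks of a signed composition -/

lemma phat_zero (p : List ℤ) : phat p 0 = 0 := rfl

lemma phat_succ_lt {p : List ℤ} {i : ℕ} (h : i < p.length) :
    phat p (i + 1) = phat p i + (p.getD i 0).natAbs := by
  rw [phat, phat, List.take_succ, List.map_append, List.sum_append,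
    List.getElem?_eq_getElem h, List.getD_eq_getElem _ _ h]
  simp

lemma phat_succ_ge {p : List ℤ} {i : ℕ} (h : p.length ≤ i) :
    phat p (i + 1) = phat p i := by
  rw [phat, phat, List.take_succ]
  rw [List.getElem?_eq_none h]
  simp

lemma phat_mono (p : List ℤ) : Monotone (phat p) := by
  apply monotone_nat_of_le_succ
  intro i
  rcases lt_or_ge i p.length with h | h
  · rw [phat_succ_lt h]; omega
  · rw [phat_succ_ge h]

lemma phat_length {n : ℕ} {p : List ℤ} (hp : IsSignedComposition n p) :
    phat p p.length = n := by
  rw [phat, List.take_length]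
  exact hp.2

lemma phat_le {n : ℕ} {p : List ℤ} (hp : IsSignedComposition n p) (i : ℕ) :
    phat p i ≤ n := by
  rcases le_or_gt i p.length with h | h
  · rw [← phat_length hp]; exact phat_mono p h
  · rw [← phat_length hp]
    have : phat p i = phat p p.length := by
      rw [phat, phat, List.take_length, List.take_of_length_le (by omega)]
    omega

lemma blk_subset {n : ℕ} {p : List ℤ} (hp : IsSignedComposition n p) {i : ℕ}
    (hi : i < p.length) : blk p i ⊆ Finset.Icc (1:ℤ) n := by
  intro a ha
  rw [blk, Finset.mem_Icc] at ha
  have h1 := phat_le hp (i + 1)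
  rw [Finset.mem_Icc]
  omega

lemma blk_lt_blk {p : List ℤ} {i j : ℕ} (hij : i < j) {a b : ℤ}
    (ha : a ∈ blk p i) (hb : b ∈ blk p j) : a < b := by
  rw [blk, Finset.mem_Icc] at ha hb
  have h1 : phat p (i + 1) ≤ phat p j := phat_mono p (by omega)
  omega

lemma blk_unique {p : List ℤ} {i j : ℕ} {a : ℤ} (ha : a ∈ blk p i) (hb : a ∈ blk p j) :
    i = j := by
  rcases lt_trichotomy i j with h | h | h
  · exact absurd (blk_lt_blk h ha hb) (by omega)
  · exact h
  · exact absurd (blk_lt_blk h hb ha) (by omega)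

lemma exists_blk {n : ℕ} {p : List ℤ} (hp : IsSignedComposition n p) {a : ℤ}
    (h1 : 1 ≤ a) (h2 : a ≤ (n:ℤ)) : ∃ i, i < p.length ∧ a ∈ blk p i := by
  classical
  set P : ℕ → Prop := fun i => (phat p i : ℤ) < a with hP
  have hP0 : P 0 := by rw [hP]; simp only [phat_zero]; omega
  set j := Nat.findGreatest P p.length with hj
  have hPj : P j := Nat.findGreatest_spec (Nat.zero_le _) hP0
  have hjle : j ≤ p.length := Nat.findGreatest_le _
  have hjlt : j < p.length := by
    rcases eq_or_lt_of_le hjle with h | h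
    · exfalso
      rw [hP] at hPj
      rw [h, phat_length hp] at hPj
      omega
    · exact h
  have hnext : ¬ P (j + 1) := by
    apply Nat.findGreatest_is_greatest
    · rw [← hj]; omega
    · omega
  refine ⟨j, hjlt, ?_⟩
  rw [blk, Finset.mem_Icc]
  rw [hP] at hPj
  simp only [hP, not_lt] at hnext
  omega

/-! ### `absList` compatibility -/

lemma absList_length (p : List ℤ) : (absList p).length = p.length := by
  rw [absList, List.length_map]

lemma phat_absList (p : List ℤ) (i : ℕ) : phat (absList p) i = phat p i := by
  rw [phat, phat, absList, ← List.map_take, List.map_map]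
  congr 1
  apply List.map_congr_left
  intro x _
  simp [Int.natAbs_abs]

lemma blk_absList (p : List ℤ) (i : ℕ) : blk (absList p) i = blk p i := by
  rw [blk, blk, phat_absList, phat_absList]

lemma absList_getD_nonneg (p : List ℤ) (i : ℕ) : 0 ≤ (absList p).getD i 0 := by
  rcases lt_or_ge i (absList p).length with h | h
  · rw [List.getD_eq_getElem _ _ h]
    simp only [absList, List.getElem_map]
    exact abs_nonneg _
  · rw [List.getD_eq_default _ _ h]

lemma mem_Wyoung_abs {n : ℕ} {p : List ℤ} {v : W n} :
    v ∈ Wyoung n (absList p) ↔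
    ∀ i < p.length, ∀ a ∈ blk p i, (v : Perm') a ∈ blk p i ∨ -((v : Perm') a) ∈ blk p i := by
  constructor
  · intro hv i hi a ha
    have := (hv i (by rwa [absList_length])).1 a (by rwa [blk_absList])
    rwa [blk_absList] at this
  · intro hv i hi
    rw [absList_length] at hi
    constructor
    · intro a ha
      rw [blk_absList] at ha ⊢
      exact hv i hi a ha
    · intro hneg
      exact absurd hneg (not_lt.2 (absList_getD_nonneg p i))

lemma blk_pos {p : List ℤ} {i : ℕ} {a : ℤ} (ha : a ∈ blk p i) : 0 < a := by
  rw [blk, Finset.mem_Icc] at ha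
  omega

lemma Wyoung_abs_mem {n : ℕ} {p : List ℤ} {v : W n} (hv : v ∈ Wyoung n (absList p))
    {i : ℕ} (hi : i < p.length) {a : ℤ} (ha : a ∈ blk p i) :
    |(v : Perm') a| ∈ blk p i := by
  rcases mem_Wyoung_abs.1 hv i hi a ha with h | h
  · rwa [abs_of_pos (blk_pos h)]
  · rw [abs_of_neg (by have := blk_pos h; omega)]
    exact h

lemma Wyoung_inv {n : ℕ} {p : List ℤ} {v : W n} (hv : v ∈ Wyoung n (absList p)) :
    v⁻¹ ∈ Wyoung n (absList p) := by
  rw [mem_Wyoung_abs]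
  intro i hi a ha
  -- the image of blk under |v ·| is blk
  have himg : (blk p i).image (fun x => |(v : Perm') x|) = blk p i := by
    apply Finset.eq_of_subset_of_card_le
    · intro x hx
      rw [Finset.mem_image] at hx
      obtain ⟨y, hy, rfl⟩ := hx
      exact Wyoung_abs_mem hv hi hy
    · rw [Finset.card_image_of_injOn]
      intro x hx y hy hxy
      simp only at hxy
      have hx' := blk_pos (by exact hx : x ∈ blk p i)
      have hy' := blk_pos (by exact hy : y ∈ blk p i)
      rcases abs_eq_abs.1 hxy with h | h
      · exact W.inj v h
      · have : (v : Perm') x = (v : Perm') (-y) := by rw [W.odd]; omega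
        have := W.inj v this
        omega
  -- surjectivity: ∃ b ∈ blk, |v b| = a
  have : a ∈ (blk p i).image (fun x => |(v : Perm') x|) := by rw [himg]; exact ha
  rw [Finset.mem_image] at this
  obtain ⟨b, hb, hba⟩ := this
  rcases abs_cases ((v : Perm') b) with ⟨h, _⟩ | ⟨h, _⟩
  · left
    have : (v⁻¹ : W n).1 a = b := by
      rw [← hba, h]
      exact Equiv.symm_apply_apply _ _
    rwa [this]
  · right
    have : (v⁻¹ : W n).1 (-a) = b := by
      rw [← hba, h, neg_neg]
      exact Equiv.symm_apply_apply _ _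
    have h2 : (v⁻¹ : W n).1 (-a) = -((v⁻¹ : W n).1 a) := W.odd _ a
    rw [h2] at this
    rwa [this]

/-! ### Characterization of `Xmin` -/

def PosInc (n : ℕ) (p : List ℤ) (w : W n) : Prop :=
  (∀ a : ℤ, 1 ≤ a → a ≤ (n:ℤ) → 0 < (w : Perm') a) ∧
  ∀ i < p.length, ∀ a b : ℤ, a ∈ blk p i → b ∈ blk p i → a < b →
    (w : Perm') a < (w : Perm') b

lemma gflip_mem_Wyoung {n : ℕ} {p : List ℤ} {a : ℤ} (h1 : 1 ≤ a) (h2 : a ≤ (n:ℤ)) :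
    gflip n a ∈ Wyoung n (absList p) := by
  rw [mem_Wyoung_abs]
  intro i hi b hb
  rw [gflip_coe h1 h2]
  by_cases h : b ∈ ({a} : Finset ℤ) ∨ -b ∈ ({a} : Finset ℤ)
  · rw [negOnFun_mem h]
    right
    rwa [neg_neg]
  · rw [negOnFun_not_mem h]
    left
    exact hb

lemma gswap_mem_Wyoung {n : ℕ} {p : List ℤ} {a : ℤ} (h1 : 1 ≤ a) (h2 : a + 1 ≤ (n:ℤ))
    {i : ℕ} (hi : i < p.length) (ha : a ∈ blk p i) (ha1 : a + 1 ∈ blk p i) :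
    gswap n a ∈ Wyoung n (absList p) := by
  rw [mem_Wyoung_abs]
  intro j hj b hb
  rw [gswap_coe h1 h2, oddify_pos _ (blk_pos hb)]
  left
  simp only [sFunCore]
  by_cases hba : b = a
  · rw [if_pos hba]
    have : j = i := blk_unique hb (by rwa [← hba] at ha)
    rw [this]
    exact ha1
  · by_cases hba1 : b = a + 1
    · rw [if_neg hba, if_pos hba1]
      have : j = i := blk_unique hb (by rwa [← hba1] at ha1)
      rw [this]
      exact ha
    · rw [if_neg hba, if_neg hba1]
      exact hb

lemma xmin_pos {n : ℕ} (hn : 0 < n) {p : List ℤ} {w : W n}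
    (hw : w ∈ Xmin n (absList p)) {a : ℤ} (h1 : 1 ≤ a) (h2 : a ≤ (n:ℤ)) :
    0 < (w : Perm') a := by
  by_contra hc
  have hne := W.ne_zero w (show a ≠ 0 from by omega)
  have hneg : (w : Perm') a < 0 := by omega
  have hb := hw _ (gflip_mem_Wyoung (p := p) h1 h2)
  rw [len_eq_stat hn, len_eq_stat hn] at hb
  have := stat_mul_gflip_dec h1 h2 w hneg
  omega

lemma xmin_mono {n : ℕ} (hn : 0 < n) {p : List ℤ} (hp : IsSignedComposition n p)
    {w : W n} (hw : w ∈ Xmin n (absList p)) {i : ℕ} (hi : i < p.length)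
    {a b : ℤ} (ha : a ∈ blk p i) (hb : b ∈ blk p i) (hab : a < b) :
    (w : Perm') a < (w : Perm') b := by
  have hadj : ∀ c : ℤ, c ∈ blk p i → c + 1 ∈ blk p i →
      (w : Perm') c < (w : Perm') (c + 1) := by
    intro c hc hc1
    by_contra hcon
    have h1 : 1 ≤ c := blk_pos hc
    have h2 : c + 1 ≤ (n:ℤ) := by
      have := blk_subset hp hi hc1
      rw [Finset.mem_Icc] at this
      omega
    have hne : (w : Perm') c ≠ (w : Perm') (c+1) := fun h => by
      have := W.inj w h; omega
    have hdesc : (w : Perm') (c+1) < (w : Perm') c := by omega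
    have hbnd := hw _ (gswap_mem_Wyoung h1 h2 hi hc hc1)
    rw [len_eq_stat hn, len_eq_stat hn] at hbnd
    have hst := stat_mul_gswap h1 h2 w
    rw [if_pos hdesc, if_neg (by omega)] at hst
    omega
  -- chain the adjacent increases
  rw [blk, Finset.mem_Icc] at ha hb
  have key : ∀ t : ℕ, ∀ b : ℤ, b = a + 1 + t → b ≤ (phat p (i+1) : ℤ) →
      (w : Perm') a < (w : Perm') b := by
    intro t
    induction t with
    | zero =>
      intro b hbe hble
      have : b = a + 1 := by omega
      rw [this]
      apply hadj a (by rw [blk, Finset.mem_Icc]; omega) (by rw [blk, Finset.mem_Icc]; omega)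
    | succ t ih =>
      intro b hbe hble
      have h1 : (w : Perm') a < (w : Perm') (b - 1) := ih (b-1) (by omega) (by omega)
      have h2 : (w : Perm') (b-1) < (w : Perm') b := by
        have := hadj (b-1) (by rw [blk, Finset.mem_Icc]; omega)
          (by rw [blk, Finset.mem_Icc]; omega)
        have e : b - 1 + 1 = b := by omega
        rwa [e] at this
      omega
  exact key (b - a - 1).toNat b (by omega) (by omega)

/-! ### `stat` is minimized on `PosInc` elements of a coset -/

def Aset (n : ℕ) (f : ℤ → ℤ) : Finset (ℤ × ℤ) :=
  ((Finset.Icc (1:ℤ) n) ×ˢ (Finset.Icc (1:ℤ) n)).filter (fun x => x.1 < x.2 ∧ f x.2 < f x.1)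

def Bset (n : ℕ) (f : ℤ → ℤ) : Finset (ℤ × ℤ) :=
  ((Finset.Icc (1:ℤ) n) ×ˢ (Finset.Icc (1:ℤ) n)).filter (fun x => x.1 ≤ x.2 ∧ f x.2 < -f x.1)

lemma statF_eq_cards (n : ℕ) (f : ℤ → ℤ) :
    statF n f = (Aset n f).card + (Bset n f).card := by
  classical
  rw [Aset, Bset, Finset.card_filter, Finset.card_filter, statF, ← Finset.sum_add_distrib]
  exact Finset.sum_congr rfl (fun x _ => rfl)

lemma stat_le_stat_mul {n : ℕ} (hn : 0 < n) {p : List ℤ} (hp : IsSignedComposition n p)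
    {w : W n} (hPI : PosInc n p w) {v : W n} (hv : v ∈ Wyoung n (absList p)) :
    stat w ≤ stat (w * v) := by
  classical
  set σ : ℤ → ℤ := fun y => |((v⁻¹ : W n) : Perm') y| with hσ
  have hveq : ((v⁻¹ : W n) : Perm') = ((v : W n) : Perm')⁻¹ := rfl
  have hσblk : ∀ i, i < p.length → ∀ y ∈ blk p i, σ y ∈ blk p i := by
    intro i hi y hy
    exact Wyoung_abs_mem (Wyoung_inv hv) hi hy
  have huσ : ∀ y : ℤ, |((w * v : W n) : Perm') (σ y)| = |(w : Perm') y| := by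
    intro y
    rcases abs_cases (((v⁻¹ : W n) : Perm') y) with ⟨h, _⟩ | ⟨h, _⟩
    · have e1 : ((w * v : W n) : Perm') (σ y) = (w : Perm') y := by
        rw [W.coe_mul, hσ]
        simp only
        rw [h, hveq, Equiv.Perm.coe_inv, Equiv.apply_symm_apply]
      rw [e1]
    · have e1 : ((w * v : W n) : Perm') (σ y) = -((w : Perm') y) := by
        rw [W.coe_mul, hσ]
        simp only
        rw [h, W.odd v, hveq, Equiv.Perm.coe_inv, Equiv.apply_symm_apply, W.odd w]
      rw [e1, abs_neg]
  have hσinj : ∀ y z : ℤ, 0 < y → 0 < z → σ y = σ z → y = z := by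
    intro y z hy hz h
    rw [hσ] at h
    simp only at h
    rcases abs_eq_abs.1 h with h' | h'
    · have := (v⁻¹ : W n).1.injective h'
      exact this
    · have h2 : ((v⁻¹ : W n) : Perm') y = ((v⁻¹ : W n) : Perm') (-z) := by
        rw [W.odd]; omega
      have := (v⁻¹ : W n).1.injective h2
      omega
  rw [stat, stat, statF_eq_cards, statF_eq_cards]
  have hB : (Bset n ⇑(w : Perm')).card = 0 := by
    rw [Finset.card_eq_zero, Finset.eq_empty_iff_forall_notMem]
    rintro ⟨i, j⟩ hx
    rw [Bset, Finset.mem_filter, Finset.mem_product, Finset.mem_Icc, Finset.mem_Icc] at hx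
    obtain ⟨⟨⟨hi1, hi2⟩, hj1, hj2⟩, hle, hval⟩ := hx
    have hval' : (w : Perm') j < -((w : Perm') i) := hval
    have := hPI.1 i hi1 hi2
    have := hPI.1 j hj1 hj2
    omega
  rw [hB, add_zero]
  set cnd : ℤ × ℤ → Prop :=
    fun x => ((w * v : W n) : Perm') (σ x.2) < ((w * v : W n) : Perm') (σ x.1) with hcnd
  have hsplit := Finset.card_filter_add_card_filter_not
    (s := Aset n ⇑(w : Perm')) (p := cnd)
  -- prepare common facts for pairs in Aset w
  have hpair : ∀ i j : ℤ, (i, j) ∈ Aset n ⇑(w : Perm') →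
      σ i < σ j ∧ 1 ≤ σ i ∧ σ i ≤ (n:ℤ) ∧ 1 ≤ σ j ∧ σ j ≤ (n:ℤ) ∧ 0 < i ∧ 0 < j ∧
      |((w * v : W n) : Perm') (σ i)| = (w : Perm') i ∧
      |((w * v : W n) : Perm') (σ j)| = (w : Perm') j ∧
      (w : Perm') j < (w : Perm') i := by
    intro i j hx
    rw [Aset, Finset.mem_filter, Finset.mem_product, Finset.mem_Icc, Finset.mem_Icc] at hx
    obtain ⟨⟨⟨hi1, hi2⟩, hj1, hj2⟩, hlt, hval⟩ := hx
    have hlt' : i < j := hlt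
    have hval' : (w : Perm') j < (w : Perm') i := hval
    obtain ⟨bi, hbi, hbimem⟩ := exists_blk hp hi1 hi2
    obtain ⟨bj, hbj, hbjmem⟩ := exists_blk hp hj1 hj2
    have hbne : bi < bj := by
      rcases lt_trichotomy bi bj with h | h | h
      · exact h
      · exfalso
        rw [h] at hbimem
        have := hPI.2 bj hbj i j hbimem hbjmem hlt'
        omega
      · exact absurd (blk_lt_blk h hbjmem hbimem) (by omega)
    have hσi := hσblk bi hbi i hbimem
    have hσj := hσblk bj hbj j hbjmem
    have hσlt : σ i < σ j := blk_lt_blk hbne hσi hσj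
    have hσi' := blk_subset hp hbi hσi
    have hσj' := blk_subset hp hbj hσj
    rw [Finset.mem_Icc] at hσi' hσj'
    have habsi : |((w * v : W n) : Perm') (σ i)| = (w : Perm') i := by
      rw [huσ i, abs_of_pos (hPI.1 i hi1 hi2)]
    have habsj : |((w * v : W n) : Perm') (σ j)| = (w : Perm') j := by
      rw [huσ j, abs_of_pos (hPI.1 j hj1 hj2)]
    exact ⟨hσlt, hσi'.1, hσi'.2, hσj'.1, hσj'.2, by omega, by omega, habsi, habsj, hval'⟩
  have hmemA : ∀ x : ℤ × ℤ, x ∈ Aset n ⇑(w : Perm') → 0 < x.1 ∧ 0 < x.2 := by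
    intro x hx
    rw [Aset, Finset.mem_filter, Finset.mem_product, Finset.mem_Icc, Finset.mem_Icc] at hx
    omega
  have h1 : ((Aset n ⇑(w : Perm')).filter cnd).card
      ≤ (Aset n ⇑((w * v : W n) : Perm')).card := by
    apply Finset.card_le_card_of_injOn (fun x => (σ x.1, σ x.2))
    · rintro ⟨i, j⟩ hx
      rw [Finset.mem_coe, Finset.mem_filter] at hx
      obtain ⟨hA, hcndx⟩ := hx
      obtain ⟨hσlt, hi1', hi2', hj1', hj2', hposi, hposj, habsi, habsj, hval⟩ := hpair i j hA
      rw [Finset.mem_coe, Aset, Finset.mem_filter, Finset.mem_product, Finset.mem_Icc, Finset.mem_Icc]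
      exact ⟨⟨⟨hi1', hi2'⟩, hj1', hj2'⟩, hσlt, hcndx⟩
    · intro x hx y hy hxy
      rw [Finset.mem_coe, Finset.mem_filter] at hx hy
      obtain ⟨hpx1, hpx2⟩ := hmemA x hx.1
      obtain ⟨hpy1, hpy2⟩ := hmemA y hy.1
      simp only [Prod.mk.injEq] at hxy
      have e1 := hσinj _ _ hpx1 hpy1 hxy.1
      have e2 := hσinj _ _ hpx2 hpy2 hxy.2
      exact Prod.ext e1 e2
  have h2 : ((Aset n ⇑(w : Perm')).filter (fun x => ¬ cnd x)).card
      ≤ (Bset n ⇑((w * v : W n) : Perm')).card := by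
    apply Finset.card_le_card_of_injOn (fun x => (σ x.1, σ x.2))
    · rintro ⟨i, j⟩ hx
      rw [Finset.mem_coe, Finset.mem_filter] at hx
      obtain ⟨hA, hcndx⟩ := hx
      obtain ⟨hσlt, hi1', hi2', hj1', hj2', hposi, hposj, habsi, habsj, hval⟩ := hpair i j hA
      have hnc : ¬ ((w * v : W n) : Perm') (σ j) < ((w * v : W n) : Perm') (σ i) := hcndx
      rw [Finset.mem_coe, Bset, Finset.mem_filter, Finset.mem_product, Finset.mem_Icc, Finset.mem_Icc]
      refine ⟨⟨⟨hi1', hi2'⟩, hj1', hj2'⟩, le_of_lt hσlt, ?_⟩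
      show ((w * v : W n) : Perm') (σ j) < -(((w * v : W n) : Perm') (σ i))
      rcases abs_cases (((w * v : W n) : Perm') (σ i)) with ⟨e1, _⟩ | ⟨e1, _⟩ <;>
        rcases abs_cases (((w * v : W n) : Perm') (σ j)) with ⟨e2, _⟩ | ⟨e2, _⟩ <;>
        omega
    · intro x hx y hy hxy
      rw [Finset.mem_coe, Finset.mem_filter] at hx hy
      obtain ⟨hpx1, hpx2⟩ := hmemA x hx.1
      obtain ⟨hpy1, hpy2⟩ := hmemA y hy.1
      simp only [Prod.mk.injEq] at hxy
      have e1 := hσinj _ _ hpx1 hpy1 hxy.1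
      have e2 := hσinj _ _ hpx2 hpy2 hxy.2
      exact Prod.ext e1 e2
  omega

lemma mem_xmin_iff {n : ℕ} (hn : 0 < n) {p : List ℤ} (hp : IsSignedComposition n p)
    (w : W n) : w ∈ Xmin n (absList p) ↔ PosInc n p w := by
  constructor
  · intro hw
    exact ⟨fun a h1 h2 => xmin_pos hn hw h1 h2,
      fun i hi a b ha hb hab => xmin_mono hn hp hw hi ha hb hab⟩
  · intro hPI v hv
    rw [len_eq_stat hn, len_eq_stat hn]
    exact stat_le_stat_mul hn hp hPI hv

/-! ### Sorted lists and `ospFun` -/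

instance : IsAntisymm ℤ (· ≤ ·) := ⟨fun _ _ h1 h2 => le_antisymm h1 h2⟩

lemma sort_Icc (u v : ℤ) :
    (Finset.Icc u v).sort (· ≤ ·) = (List.range ((v + 1 - u).toNat)).map (fun t : ℕ => u + (t : ℤ)) := by
  refine List.Perm.eq_of_pairwise' (r := (· ≤ ·)) ?_ ?_ ?_
  rotate_right
  · apply List.perm_of_nodup_nodup_toFinset_eq (Finset.sort_nodup _ _)
    · rw [List.nodup_map_iff_inj_on (List.nodup_range (n := _))]
      intro x _ y _ h
      omega
    · ext x
      rw [List.mem_toFinset, List.mem_toFinset, Finset.mem_sort, Finset.mem_Icc,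
        List.mem_map]
      constructor
      · rintro ⟨h1, h2⟩
        exact ⟨(x - u).toNat, by rw [List.mem_range]; omega, by omega⟩
      · rintro ⟨t, ht, rfl⟩
        rw [List.mem_range] at ht
        omega
  · exact Finset.pairwise_sort _ _
  · rw [List.pairwise_map]
    have := List.pairwise_lt_range (n := (v + 1 - u).toNat)
    exact this.imp (by intro a b h; omega)

lemma sort_Icc_getD (u v : ℤ) {t : ℕ} (ht : t < (v + 1 - u).toNat) :
    ((Finset.Icc u v).sort (· ≤ ·)).getD t 0 = u + t := by
  rw [sort_Icc]
  have hlen : t < ((List.range ((v + 1 - u).toNat)).map (fun s : ℕ => u + (s : ℤ))).length := by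
    rw [List.length_map, List.length_range]; exact ht
  rw [List.getD_eq_getElem _ _ hlen, List.getElem_map, List.getElem_range]

lemma mem_foldr_union {J : List (Finset ℤ)} {x : ℤ} :
    x ∈ J.foldr (· ∪ ·) ∅ ↔ ∃ A ∈ J, x ∈ A := by
  induction J with
  | nil => simp
  | cons A J ih => simp [ih]

lemma find?_range_eq_some {k i : ℕ} {pred : ℕ → Bool} (hik : i < k)
    (hmin : ∀ j < i, pred j = false) (hi : pred i = true) :
    (List.range k).find? pred = some i := by
  induction k with
  | zero => omega
  | succ k ih =>
    rw [List.range_succ, List.find?_append]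
    rcases lt_or_ge i k with h | h
    · rw [ih h]
      rfl
    · have hik' : i = k := by omega
      have hnone : (List.range k).find? pred = none := by
        rw [List.find?_eq_none]
        intro x hx
        rw [List.mem_range] at hx
        simp [hmin x (by omega)]
      rw [hnone]
      rw [show (Option.none).or (List.find? pred [k]) = List.find? pred [k] from rfl]
      subst hik'
      simp [List.find?_cons_of_pos, hi]

/-- The core (positive part) of `ospFun`. -/
def ospCore (p : List ℤ) (J : List (Finset ℤ)) : ℤ → ℤ := fun a =>
  match (List.range p.length).find?
      (fun i => decide ((phat p i : ℤ) < a ∧ a ≤ (phat p (i + 1) : ℤ))) with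
  | some i => ((J.getD i ∅).sort (· ≤ ·)).getD (a - (phat p i : ℤ) - 1).toNat 0
  | none => a

lemma ospFun_eq (p : List ℤ) (J : List (Finset ℤ)) : ospFun p J = oddify (ospCore p J) := rfl

lemma ospCore_blk {p : List ℤ} {J : List (Finset ℤ)} {i : ℕ} (hi : i < p.length)
    {a : ℤ} (ha : a ∈ blk p i) :
    ospCore p J a = ((J.getD i ∅).sort (· ≤ ·)).getD (a - (phat p i : ℤ) - 1).toNat 0 := by
  rw [blk, Finset.mem_Icc] at ha
  have hfind : (List.range p.length).find?
      (fun j => decide ((phat p j : ℤ) < a ∧ a ≤ (phat p (j + 1) : ℤ))) = some i := by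
    apply find?_range_eq_some hi
    · intro j hj
      rw [decide_eq_false_iff_not]
      have : phat p (j + 1) ≤ phat p i := phat_mono p (by omega)
      omega
    · rw [decide_eq_true_eq]
      omega
  rw [ospCore, hfind]

lemma ospCore_high {n : ℕ} {p : List ℤ} (hp : IsSignedComposition n p)
    {J : List (Finset ℤ)} {a : ℤ} (ha : (n:ℤ) < a) : ospCore p J a = a := by
  have hfind : (List.range p.length).find?
      (fun j => decide ((phat p j : ℤ) < a ∧ a ≤ (phat p (j + 1) : ℤ))) = none := by
    rw [List.find?_eq_none]
    intro j _
    rw [Bool.not_eq_true, decide_eq_false_iff_not]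
    have := phat_le hp (j + 1)
    omega
  rw [ospCore, hfind]

/-! ### Properties of `wOSP` -/

lemma osp_getD_subset {n : ℕ} {p : List ℤ} {J : List (Finset ℤ)} (hJ : IsOSP n p J)
    {i : ℕ} (hi : i < p.length) : J.getD i ∅ ⊆ Finset.Icc (1:ℤ) n := by
  intro x hx
  rw [← hJ.2.2.2, mem_foldr_union]
  have hi' : i < J.length := by rw [hJ.1]; exact hi
  exact ⟨J.getD i ∅, by rw [List.getD_eq_getElem _ _ hi']; exact List.getElem_mem hi', hx⟩

lemma blk_card {p : List ℤ} {i : ℕ} (hi : i < p.length) :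
    (blk p i).card = (p.getD i 0).natAbs := by
  rw [blk, Int.card_Icc, phat_succ_lt hi]
  omega

lemma osp_sort_length {n : ℕ} {p : List ℤ} {J : List (Finset ℤ)} (hJ : IsOSP n p J)
    {i : ℕ} (hi : i < p.length) :
    ((J.getD i ∅).sort (· ≤ ·)).length = (p.getD i 0).natAbs := by
  rw [Finset.length_sort, hJ.2.1 i hi]

lemma blk_idx_lt {p : List ℤ} {i : ℕ} (hi : i < p.length) {a : ℤ} (ha : a ∈ blk p i) :
    (a - (phat p i : ℤ) - 1).toNat < (p.getD i 0).natAbs := by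
  rw [blk, Finset.mem_Icc] at ha
  have := phat_succ_lt hi
  omega

lemma ospCore_mem {n : ℕ} {p : List ℤ} {J : List (Finset ℤ)} (hJ : IsOSP n p J)
    {i : ℕ} (hi : i < p.length) {a : ℤ} (ha : a ∈ blk p i) :
    ospCore p J a ∈ J.getD i ∅ := by
  rw [ospCore_blk hi ha]
  have hlen : (a - (phat p i : ℤ) - 1).toNat < ((J.getD i ∅).sort (· ≤ ·)).length := by
    rw [osp_sort_length hJ hi]
    exact blk_idx_lt hi ha
  rw [List.getD_eq_getElem _ _ hlen]
  exact (Finset.mem_sort _).1 (List.getElem_mem hlen)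

lemma ospCore_strictMono {n : ℕ} {p : List ℤ} {J : List (Finset ℤ)} (hJ : IsOSP n p J)
    {i : ℕ} (hi : i < p.length) {a b : ℤ} (ha : a ∈ blk p i) (hb : b ∈ blk p i)
    (hab : a < b) : ospCore p J a < ospCore p J b := by
  rw [ospCore_blk hi ha, ospCore_blk hi hb]
  have hlena : (a - (phat p i : ℤ) - 1).toNat < ((J.getD i ∅).sort (· ≤ ·)).length := by
    rw [osp_sort_length hJ hi]; exact blk_idx_lt hi ha
  have hlenb : (b - (phat p i : ℤ) - 1).toNat < ((J.getD i ∅).sort (· ≤ ·)).length := by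
    rw [osp_sort_length hJ hi]; exact blk_idx_lt hi hb
  rw [List.getD_eq_getElem _ _ hlena, List.getD_eq_getElem _ _ hlenb]
  have hsorted := List.sortedLT_iff_pairwise.1 (Finset.sortedLT_sort (J.getD i ∅))
  apply List.pairwise_iff_getElem.1 hsorted
  have h1 := blk_pos ha
  rw [blk, Finset.mem_Icc] at ha hb
  omega

lemma osp_image {n : ℕ} {p : List ℤ} {J : List (Finset ℤ)} (hJ : IsOSP n p J)
    {i : ℕ} (hi : i < p.length) :
    (blk p i).image (ospCore p J) = J.getD i ∅ := by
  apply Finset.eq_of_subset_of_card_le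
  · intro x hx
    rw [Finset.mem_image] at hx
    obtain ⟨a, ha, rfl⟩ := hx
    exact ospCore_mem hJ hi ha
  · rw [hJ.2.1 i hi, Finset.card_image_of_injOn, blk_card hi]
    intro x hx y hy hxy
    rcases lt_trichotomy x y with h | h | h
    · exact absurd hxy (by have := ospCore_strictMono hJ hi hx hy h; omega)
    · exact h
    · exact absurd hxy (by have := ospCore_strictMono hJ hi hy hx h; omega)

lemma ospCore_pos {n : ℕ} {p : List ℤ} (hp : IsSignedComposition n p)
    {J : List (Finset ℤ)} (hJ : IsOSP n p J) {a : ℤ} (ha : 0 < a) :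
    0 < ospCore p J a := by
  rcases le_or_gt a (n:ℤ) with h | h
  · obtain ⟨i, hi, hblk⟩ := exists_blk hp (by omega) h
    have := osp_getD_subset hJ hi (ospCore_mem hJ hi hblk)
    rw [Finset.mem_Icc] at this
    omega
  · rw [ospCore_high hp h]; omega

lemma ospCore_le {n : ℕ} {p : List ℤ} (hp : IsSignedComposition n p)
    {J : List (Finset ℤ)} (hJ : IsOSP n p J) {a : ℤ} (h1 : 0 < a) (h2 : a ≤ (n:ℤ)) :
    ospCore p J a ≤ (n:ℤ) := by
  obtain ⟨i, hi, hblk⟩ := exists_blk hp (by omega) h2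
  have := osp_getD_subset hJ hi (ospCore_mem hJ hi hblk)
  rw [Finset.mem_Icc] at this
  omega

lemma ospCore_inj {n : ℕ} {p : List ℤ} (hp : IsSignedComposition n p)
    {J : List (Finset ℤ)} (hJ : IsOSP n p J) {a b : ℤ} (ha : 0 < a) (hb : 0 < b)
    (hab : ospCore p J a = ospCore p J b) : a = b := by
  rcases le_or_gt a (n:ℤ) with h1 | h1 <;> rcases le_or_gt b (n:ℤ) with h2 | h2
  · obtain ⟨i, hi, hai⟩ := exists_blk hp (by omega) h1
    obtain ⟨j, hj, hbj⟩ := exists_blk hp (by omega) h2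
    by_cases hij : i = j
    · subst hij
      rcases lt_trichotomy a b with h | h | h
      · exact absurd hab (by have := ospCore_strictMono hJ hi hai hbj h; omega)
      · exact h
      · exact absurd hab (by have := ospCore_strictMono hJ hi hbj hai h; omega)
    · exfalso
      have hd := hJ.2.2.1 i hi j hj hij
      have h3 := ospCore_mem hJ hi hai
      have h4 := ospCore_mem hJ hj hbj
      rw [hab] at h3
      exact Finset.disjoint_left.1 hd h3 h4
  · exfalso
    have := ospCore_le hp hJ ha h1
    rw [hab, ospCore_high hp h2] at this
    omega
  · exfalso
    have := ospCore_le hp hJ hb h2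
    rw [← hab, ospCore_high hp h1] at this
    omega
  · rw [ospCore_high hp h1, ospCore_high hp h2] at hab
    exact hab

lemma ospCore_surj {n : ℕ} {p : List ℤ} (hp : IsSignedComposition n p)
    {J : List (Finset ℤ)} (hJ : IsOSP n p J) {y : ℤ} (hy : 0 < y) :
    ∃ a, 0 < a ∧ ospCore p J a = y := by
  rcases le_or_gt y (n:ℤ) with h | h
  · have hy' : y ∈ J.foldr (· ∪ ·) ∅ := by
      rw [hJ.2.2.2, Finset.mem_Icc]; omega
    rw [mem_foldr_union] at hy'
    obtain ⟨A, hA, hyA⟩ := hy'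
    rw [List.mem_iff_getElem] at hA
    obtain ⟨i, hilen, rfl⟩ := hA
    have hi : i < p.length := by rw [← hJ.1]; exact hilen
    have hyA' : y ∈ J.getD i ∅ := by rwa [List.getD_eq_getElem _ _ hilen]
    have : y ∈ (blk p i).image (ospCore p J) := by rw [osp_image hJ hi]; exact hyA'
    rw [Finset.mem_image] at this
    obtain ⟨a, ha, hay⟩ := this
    exact ⟨a, blk_pos ha, hay⟩
  · exact ⟨y, hy, ospCore_high hp h⟩

lemma oddify_bijective {g : ℤ → ℤ} (hpos : ∀ a, 0 < a → 0 < g a)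
    (hinj : ∀ a b, 0 < a → 0 < b → g a = g b → a = b)
    (hsurj : ∀ y, 0 < y → ∃ a, 0 < a ∧ g a = y) : Function.Bijective (oddify g) := by
  constructor
  · intro a b hab
    rcases lt_trichotomy a 0 with ha | ha | ha <;> rcases lt_trichotomy b 0 with hb | hb | hb
    · -- both negative
      have e1 : oddify g a = -(g (-a)) := by
        rw [show a = -(-a) from by omega, oddify_neg, oddify_pos _ (by omega), neg_neg]
      have e2 : oddify g b = -(g (-b)) := by
        rw [show b = -(-b) from by omega, oddify_neg, oddify_pos _ (by omega), neg_neg]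
      rw [e1, e2] at hab
      have := hinj (-a) (-b) (by omega) (by omega) (by omega)
      omega
    · exfalso
      rw [hb, oddify_zero] at hab
      have e1 : oddify g a = -(g (-a)) := by
        rw [show a = -(-a) from by omega, oddify_neg, oddify_pos _ (by omega), neg_neg]
      have := hpos (-a) (by omega)
      omega
    · exfalso
      rw [oddify_pos _ hb] at hab
      have e1 : oddify g a = -(g (-a)) := by
        rw [show a = -(-a) from by omega, oddify_neg, oddify_pos _ (by omega), neg_neg]
      have := hpos (-a) (by omega)
      have := hpos b hb
      omega
    · exfalso
      rw [ha, oddify_zero] at hab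
      have e2 : oddify g b = -(g (-b)) := by
        rw [show b = -(-b) from by omega, oddify_neg, oddify_pos _ (by omega), neg_neg]
      have := hpos (-b) (by omega)
      omega
    · omega
    · exfalso
      rw [ha, oddify_zero] at hab
      rw [oddify_pos _ hb] at hab
      have := hpos b hb
      omega
    · exfalso
      rw [oddify_pos _ ha] at hab
      have e2 : oddify g b = -(g (-b)) := by
        rw [show b = -(-b) from by omega, oddify_neg, oddify_pos _ (by omega), neg_neg]
      have := hpos (-b) (by omega)
      have := hpos a ha
      omega
    · exfalso
      rw [hb, oddify_zero, oddify_pos _ ha] at hab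
      have := hpos a ha
      omega
    · rw [oddify_pos _ ha, oddify_pos _ hb] at hab
      exact hinj a b ha hb hab
  · intro y
    rcases lt_trichotomy y 0 with hy | hy | hy
    · obtain ⟨a, ha, hay⟩ := hsurj (-y) (by omega)
      refine ⟨-a, ?_⟩
      rw [oddify_neg, oddify_pos _ ha, hay]
      omega
    · exact ⟨0, by rw [hy, oddify_zero]⟩
    · obtain ⟨a, ha, hay⟩ := hsurj y hy
      exact ⟨a, by rw [oddify_pos _ ha, hay]⟩

lemma wOSP_coe {n : ℕ} {p : List ℤ} (hp : IsSignedComposition n p)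
    {J : List (Finset ℤ)} (hJ : IsOSP n p J) :
    ⇑((wOSP n p J : W n) : Perm') = ospFun p J := by
  have hbij : Function.Bijective (oddify (ospCore p J)) :=
    oddify_bijective (fun a ha => ospCore_pos hp hJ ha)
      (fun a b ha hb h => ospCore_inj hp hJ ha hb h)
      (fun y hy => ospCore_surj hp hJ hy)
  have hcoe : ⇑(permOfFun (ospFun p J)) = ospFun p J := by
    rw [ospFun_eq]
    exact permOfFun_coe (Equiv.ofBijective _ hbij) rfl
  have hmem : permOfFun (ospFun p J) ∈ W n := by
    rw [mem_W_iff, hcoe, ospFun_eq]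
    constructor
    · intro a
      exact oddify_neg _ a
    · intro a hab
      rcases lt_trichotomy a 0 with h | h | h
      · have h2 : (n:ℤ) < -a := by rcases abs_cases a with ⟨e, _⟩ | ⟨e, _⟩ <;> omega
        rw [show a = -(-a) from by omega, oddify_neg, oddify_pos _ (by omega),
          ospCore_high hp h2]
      · rw [h, oddify_zero]
      · have h2 : (n:ℤ) < a := by rcases abs_cases a with ⟨e, _⟩ | ⟨e, _⟩ <;> omega
        rw [oddify_pos _ h, ospCore_high hp h2]
  rw [wOSP, toW_coe hmem, hcoe]

lemma wOSP_posInc {n : ℕ} (hn : 0 < n) {p : List ℤ} (hp : IsSignedComposition n p)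
    {J : List (Finset ℤ)} (hJ : IsOSP n p J) : PosInc n p (wOSP n p J) := by
  constructor
  · intro a h1 h2
    rw [wOSP_coe hp hJ, ospFun_eq, oddify_pos _ (by omega)]
    exact ospCore_pos hp hJ (by omega)
  · intro i hi a b ha hb hab
    rw [wOSP_coe hp hJ, ospFun_eq, oddify_pos _ (blk_pos ha), oddify_pos _ (blk_pos hb)]
    exact ospCore_strictMono hJ hi ha hb hab

/-! ### From `PosInc` elements to ordered set partitions -/

def ospOf (n : ℕ) (p : List ℤ) (w : W n) : List (Finset ℤ) :=
  (List.range p.length).map (fun i => (blk p i).image (fun a => (w : Perm') a))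

lemma ospOf_def (n : ℕ) (p : List ℤ) (w : W n) :
    ospOf n p w = (List.range p.length).map (fun i => (blk p i).image (fun a => (w : Perm') a)) :=
  rfl

lemma ospOf_length (n : ℕ) (p : List ℤ) (w : W n) : (ospOf n p w).length = p.length := by
  rw [ospOf_def, List.length_map, List.length_range]

lemma ospOf_getD {n : ℕ} {p : List ℤ} {w : W n} {i : ℕ} (hi : i < p.length) :
    (ospOf n p w).getD i ∅ = (blk p i).image (fun a => (w : Perm') a) := by
  have hlen : i < (ospOf n p w).length := by rw [ospOf_length]; exact hi
  rw [List.getD_eq_getElem _ _ hlen]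
  simp only [ospOf_def, List.getElem_map, List.getElem_range]

lemma posInc_val_mem {n : ℕ} {w : W n} (hPI1 : ∀ a : ℤ, 1 ≤ a → a ≤ (n:ℤ) → 0 < (w : Perm') a)
    {a : ℤ} (h1 : 1 ≤ a) (h2 : a ≤ (n:ℤ)) : (w : Perm') a ∈ Finset.Icc (1:ℤ) n := by
  have hpos := hPI1 a h1 h2
  have habs : |(w : Perm') a| ≤ (n:ℤ) := W.abs_le w (by rw [abs_of_pos (by omega)]; omega)
  have := le_abs_self ((w : Perm') a)
  rw [Finset.mem_Icc]
  omega

lemma posInc_image_Icc {n : ℕ} {w : W n}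
    (hPI1 : ∀ a : ℤ, 1 ≤ a → a ≤ (n:ℤ) → 0 < (w : Perm') a) :
    (Finset.Icc (1:ℤ) n).image (fun a => (w : Perm') a) = Finset.Icc (1:ℤ) n := by
  apply Finset.eq_of_subset_of_card_le
  · intro x hx
    rw [Finset.mem_image] at hx
    obtain ⟨a, ha, rfl⟩ := hx
    rw [Finset.mem_Icc] at ha
    exact posInc_val_mem hPI1 ha.1 ha.2
  · rw [Finset.card_image_of_injOn (fun x _ y _ h => W.inj w h)]

lemma isOSP_ospOf {n : ℕ} (hn : 0 < n) {p : List ℤ} (hp : IsSignedComposition n p)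
    {w : W n} (hPI : PosInc n p w) : IsOSP n p (ospOf n p w) := by
  refine ⟨ospOf_length n p w, ?_, ?_, ?_⟩
  · intro i hi
    rw [ospOf_getD hi, Finset.card_image_of_injOn (fun x _ y _ h => W.inj w h), blk_card hi]
  · intro i hi j hj hij
    rw [ospOf_getD hi, ospOf_getD hj, Finset.disjoint_left]
    rintro x hx hy
    rw [Finset.mem_image] at hx hy
    obtain ⟨a, ha, rfl⟩ := hx
    obtain ⟨b, hb, hba⟩ := hy
    have hba' : b = a := W.inj w hba
    rw [hba'] at hb
    exact hij (blk_unique ha hb)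
  · ext x
    rw [mem_foldr_union]
    constructor
    · rintro ⟨A, hA, hxA⟩
      rw [ospOf_def, List.mem_map] at hA
      obtain ⟨i, hi, rfl⟩ := hA
      rw [List.mem_range] at hi
      rw [Finset.mem_image] at hxA
      obtain ⟨a, ha, rfl⟩ := hxA
      have := blk_subset hp hi ha
      rw [Finset.mem_Icc] at this
      exact posInc_val_mem hPI.1 this.1 this.2
    · intro hx
      rw [← posInc_image_Icc hPI.1, Finset.mem_image] at hx
      obtain ⟨a, ha, rfl⟩ := hx
      rw [Finset.mem_Icc] at ha
      obtain ⟨i, hi, hblk⟩ := exists_blk hp ha.1 ha.2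
      refine ⟨(blk p i).image (fun a => (w : Perm') a), ?_, ?_⟩
      · rw [ospOf_def, List.mem_map]
        exact ⟨i, by rw [List.mem_range]; exact hi, rfl⟩
      · rw [Finset.mem_image]
        exact ⟨a, hblk, rfl⟩

lemma sort_image_of_strictMono {s : Finset ℤ} {f : ℤ → ℤ}
    (hmono : ∀ a ∈ s, ∀ b ∈ s, a < b → f a < f b) :
    (s.image f).sort (· ≤ ·) = (s.sort (· ≤ ·)).map f := by
  classical
  have hinj : ∀ a ∈ s, ∀ b ∈ s, f a = f b → a = b := by
    intro a ha b hb hab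
    rcases lt_trichotomy a b with h | h | h
    · exact absurd hab (by have := hmono a ha b hb h; omega)
    · exact h
    · exact absurd hab (by have := hmono b hb a ha h; omega)
  refine List.Perm.eq_of_pairwise' (r := (· ≤ ·)) ?_ ?_ ?_
  rotate_right
  · apply List.perm_of_nodup_nodup_toFinset_eq (Finset.sort_nodup _ _)
    · rw [List.nodup_map_iff_inj_on (Finset.sort_nodup _ _)]
      intro x hx y hy hxy
      rw [Finset.mem_sort] at hx hy
      exact hinj x hx y hy hxy
    · ext x
      rw [List.mem_toFinset, List.mem_toFinset, Finset.mem_sort, Finset.mem_image,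
        List.mem_map]
      constructor
      · rintro ⟨a, ha, rfl⟩
        exact ⟨a, (Finset.mem_sort _).2 ha, rfl⟩
      · rintro ⟨a, ha, rfl⟩
        exact ⟨a, (Finset.mem_sort _).1 ha, rfl⟩
  · exact Finset.pairwise_sort _ _
  · rw [List.pairwise_map]
    have hs := List.sortedLT_iff_pairwise.1 (Finset.sortedLT_sort s)
    apply List.Pairwise.imp_of_mem _ hs
    intro a b ha hb hab
    rw [Finset.mem_sort] at ha hb
    exact le_of_lt (hmono a ha b hb hab)

lemma wOSP_ospOf {n : ℕ} (hn : 0 < n) {p : List ℤ} (hp : IsSignedComposition n p)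
    {w : W n} (hPI : PosInc n p w) : wOSP n p (ospOf n p w) = w := by
  have hJ := isOSP_ospOf hn hp hPI
  have hcoe := wOSP_coe hp hJ
  have key : ∀ y : ℤ, 0 ≤ y → ospFun p (ospOf n p w) y = (w : Perm') y := by
    intro y hy
    rcases eq_or_lt_of_le hy with h0 | hy'
    · rw [← h0, ospFun_eq, oddify_zero, W.map_zero w]
    rcases le_or_gt y (n:ℤ) with hyn | hyn
    · obtain ⟨i, hi, hblk⟩ := exists_blk hp (by omega) hyn
      rw [ospFun_eq, oddify_pos _ hy', ospCore_blk hi hblk, ospOf_getD hi,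
        sort_image_of_strictMono (fun a ha b hb hab => hPI.2 i hi a b ha hb hab)]
      have hlen1 : (y - (phat p i : ℤ) - 1).toNat < ((blk p i).sort (· ≤ ·)).length := by
        rw [Finset.length_sort, blk_card hi]
        exact blk_idx_lt hi hblk
      have hlen2 : (y - (phat p i : ℤ) - 1).toNat
          < (((blk p i).sort (· ≤ ·)).map (fun a => (w : Perm') a)).length := by
        rw [List.length_map]; exact hlen1
      rw [List.getD_eq_getElem _ _ hlen2, List.getElem_map]
      congr 1
      have hbound : (y - (phat p i : ℤ) - 1).toNat
          < (((phat p (i+1) : ℤ)) + 1 - ((phat p i : ℤ) + 1)).toNat := by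
        have := blk_idx_lt hi hblk
        have := phat_succ_lt hi
        omega
      have hval := sort_Icc_getD ((phat p i : ℤ) + 1) ((phat p (i+1) : ℤ)) hbound
      have hblkdef : blk p i = Finset.Icc ((phat p i : ℤ) + 1) ((phat p (i+1) : ℤ)) := rfl
      rw [← hblkdef] at hval
      rw [List.getD_eq_getElem _ _ hlen1] at hval
      rw [hval]
      rw [blk, Finset.mem_Icc] at hblk
      omega
    · rw [ospFun_eq, oddify_pos _ hy', ospCore_high hp hyn,
        W.fix w (by rw [abs_of_pos hy']; omega)]
  apply Subtype.ext
  apply Equiv.ext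
  intro x
  rcases le_or_gt 0 x with hx | hx
  · calc ((wOSP n p (ospOf n p w) : W n) : Perm') x = ospFun p (ospOf n p w) x :=
        congrFun hcoe x
    _ = (w : Perm') x := key x hx
  · have e1 : ((wOSP n p (ospOf n p w) : W n) : Perm') (-(-x))
        = -(((wOSP n p (ospOf n p w) : W n) : Perm') (-x)) := W.odd _ (-x)
    have e2 : (w : Perm') (-(-x)) = -((w : Perm') (-x)) := W.odd _ (-x)
    rw [neg_neg] at e1 e2
    rw [e1, e2]
    have e3 : ((wOSP n p (ospOf n p w) : W n) : Perm') (-x) = (w : Perm') (-x) := by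
      calc ((wOSP n p (ospOf n p w) : W n) : Perm') (-x) = ospFun p (ospOf n p w) (-x) :=
          congrFun hcoe (-x)
      _ = (w : Perm') (-x) := key (-x) (by omega)
    rw [e3]

lemma wOSP_image {n : ℕ} {p : List ℤ} (hp : IsSignedComposition n p)
    {J : List (Finset ℤ)} (hJ : IsOSP n p J) {i : ℕ} (hi : i < p.length) :
    (blk p i).image (fun a => ((wOSP n p J : W n) : Perm') a) = J.getD i ∅ := by
  rw [← osp_image hJ hi]
  apply Finset.image_congr
  intro a ha
  rw [Finset.mem_coe] at ha
  rw [wOSP_coe hp hJ]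
  show ospFun p J a = ospCore p J a
  rw [ospFun_eq, oddify_pos _ (blk_pos ha)]

lemma wOSP_injOn {n : ℕ} (hn : 0 < n) {p : List ℤ} (hp : IsSignedComposition n p) :
    Set.InjOn (wOSP n p) {J | IsOSP n p J} := by
  intro J hJ J' hJ' h
  simp only [Set.mem_setOf_eq] at hJ hJ'
  apply List.ext_getElem (by rw [hJ.1, hJ'.1])
  intro i h1 h2
  have hi : i < p.length := by rw [← hJ.1]; exact h1
  have e1 : J[i] = J.getD i ∅ := (List.getD_eq_getElem _ _ h1).symm
  have e2 : J'[i] = J'.getD i ∅ := (List.getD_eq_getElem _ _ h2).symm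
  rw [e1, e2, ← wOSP_image hp hJ hi, ← wOSP_image hp hJ' hi, h]

lemma xmin_eq {n : ℕ} (hn : 0 < n) {p : List ℤ} (hp : IsSignedComposition n p) :
    Xmin n (absList p) = (wOSP n p) '' {J | IsOSP n p J} := by
  ext w
  rw [mem_xmin_iff hn hp w]
  constructor
  · intro hPI
    exact ⟨ospOf n p w, isOSP_ospOf hn hp hPI, wOSP_ospOf hn hp hPI⟩
  · rintro ⟨J, hJ, rfl⟩
    exact wOSP_posInc hn hp hJ

/-- Vazirani's element
`I_p = Σ_{(J_1,…,J_k)} w_{(J_1,…,J_k)} ε_{P_1}^{ξ_1} r_{P_1} ⋯ ε_{P_k}^{ξ_k} r_{P_k}`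
(the sum over ordered set partitions of `[n]` with `|J_i| = |p_i|`) equals `e_p`. -/
theorem stmt2 (n : ℕ) (hn : 0 < n) (p : List ℤ) (hp : IsSignedComposition n p) :
    eP n p =
      ∑ᶠ J ∈ {J : List (Finset ℤ) | IsOSP n p J},
        MonoidAlgebra.single (wOSP n p J) (1 : ℂ) *
          ((List.range p.length).map (fun i =>
            epsP n (blk p i) (decide (0 < p.getD i 0)) * reutP n (blk p i))).prod := by
  classical
  set C : MonoidAlgebra ℂ (W n) := ((List.range p.length).map (fun i =>
    epsP n (blk p i) (decide (0 < p.getD i 0)) * reutP n (blk p i))).prod with hC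
  have hinj := wOSP_injOn hn hp
  have hfin : {J : List (Finset ℤ) | IsOSP n p J}.Finite :=
    Set.Finite.of_finite_image (Set.toFinite _) hinj
  have h1 : xp n (absList p)
      = ∑ J ∈ hfin.toFinset, MonoidAlgebra.single (wOSP n p J) (1 : ℂ) := by
    rw [xp, xmin_eq hn hp, finsum_mem_image hinj,
      finsum_mem_eq_finite_toFinset_sum _ hfin]
  have h2 : ∑ᶠ J ∈ {J : List (Finset ℤ) | IsOSP n p J},
        (MonoidAlgebra.single (wOSP n p J) (1 : ℂ) * C)
      = ∑ J ∈ hfin.toFinset, (MonoidAlgebra.single (wOSP n p J) (1 : ℂ) * C) :=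
    finsum_mem_eq_finite_toFinset_sum _ hfin
  rw [eP, ← hC, h1, Finset.sum_mul, ← h2]

end HypOct
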